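/- arXiv:1409.8350 — 4 statements merged into one kernel-verified Lean document; each statement's English description precedes it below -/
import Mathlib

section
/- Suppose the Gauss periods η_a, 0 ≤ a ≤ N−1, take exactly three distinct rational values α₁, α₂, α₃, and let I_i = {γ̄^a ∈ Z_N : η_a = α_i} for i = 1,2,3. Then in the group ring ℚ[Z_N] one has (α₁I₁ + α₂I₂ + α₃I₃)(α₁I₁^{(−1)} + α₂I₂^{(−1)} + α₃I₃^{(−1)}) = q·1 − ((q−1)/N)·Z_N, where each subset is identified with the sum of its elements and Z_N denotes the sum of all elements of the group. -/
open scoped BigOperators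

set_option linter.unusedSectionVars false
set_option maxHeartbeats 1000000

theorem gp_flatten (N e : ℕ) (hN : 0 < N) (g : ℕ → ℂ) :
    ∑ n ∈ Finset.range (N * e), g n = ∑ a ∈ Finset.range N, ∑ j ∈ Finset.range e, g (a + N * j) := by
  rw [← Finset.sum_product']
  refine Finset.sum_nbij' (fun n => (n % N, n / N)) (fun x => x.1 + N * x.2) ?_ ?_ ?_ ?_ ?_
  · intro n hn
    simp only [Finset.mem_range, Finset.mem_product] at *
    exact ⟨Nat.mod_lt _ hN, Nat.div_lt_of_lt_mul (by omega)⟩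
  · intro x hx
    simp only [Finset.mem_range, Finset.mem_product] at *
    obtain ⟨h1, h2⟩ := hx
    calc x.1 + N * x.2 + 1 ≤ N + N * x.2 := by omega
    _ ≤ N * e := by nlinarith
  · intro n hn; simp only; rw [Nat.mod_add_div n N]
  · intro x hx
    simp only [Finset.mem_range, Finset.mem_product] at hx
    ext
    · simp [Nat.add_mul_mod_self_left, Nat.mod_eq_of_lt hx.1]
    · simp [Nat.add_mul_div_left _ _ hN, Nat.div_eq_of_lt hx.1]
  · intro n hn; simp only; rw [Nat.mod_add_div n N]

theorem gp_zmod_sum (N : ℕ) [NeZero N] (f : ZMod N → ℂ) :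
    ∑ x : ZMod N, f x = ∑ a ∈ Finset.range N, f a := by
  refine Finset.sum_nbij' (fun x => x.val) (fun a => (a : ZMod N)) ?_ ?_ ?_ ?_ ?_
  · intro x _; simpa [Finset.mem_range] using ZMod.val_lt x
  · intros; exact Finset.mem_univ _
  · intro x _; simp [ZMod.natCast_val]
  · intro a ha; simp [ZMod.val_natCast_of_lt (Finset.mem_range.mp ha)]
  · intro x _; simp [ZMod.natCast_val]

section psi
variable (p q : ℕ) [Fact p.Prime]
  (F : Type) [Field F] [Fintype F] [DecidableEq F] [Algebra (ZMod p) F]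
  (hcard : Fintype.card F = q)
  (ζ : ℂ) (hζ : IsPrimitiveRoot ζ p)
  (ψ : F → ℂ) (hψ : ∀ x, ψ x = ζ ^ (Algebra.trace (ZMod p) F x).val)

theorem gp_zeta_pow (hζ : IsPrimitiveRoot ζ p) (n : ℕ) : ζ ^ n = ζ ^ (n % p) := by
  conv_lhs => rw [← Nat.div_add_mod n p]
  rw [pow_add, pow_mul, hζ.pow_eq_one, one_pow, one_mul]

include hζ hψ

theorem gp_psi_add (x y : F) : ψ (x + y) = ψ x * ψ y := by
  rw [hψ, hψ, hψ, map_add, ZMod.val_add, ← gp_zeta_pow p ζ hζ, pow_add]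

theorem gp_psi_zero : ψ 0 = 1 := by
  rw [hψ]; simp

theorem gp_psi_sum : ∑ x : F, ψ x = 0 := by
  have : Module.Finite (ZMod p) F := Module.Finite.of_finite
  obtain ⟨x₀, hx₀⟩ := Algebra.trace_surjective (ZMod p) F 1
  have hne : ψ x₀ ≠ 1 := by
    rw [hψ, hx₀, ZMod.val_one p, pow_one]
    exact hζ.ne_one (Fact.out : p.Prime).one_lt
  have key : ψ x₀ * ∑ x : F, ψ x = ∑ x : F, ψ x := by
    rw [Finset.mul_sum]
    exact Fintype.sum_equiv (Equiv.addLeft x₀) _ _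
      (fun x => (gp_psi_add p F ζ hζ ψ hψ x₀ x).symm)
  have h := sub_eq_zero.mpr key
  rw [← sub_one_mul] at h
  rcases mul_eq_zero.mp h with h | h
  · exact absurd (sub_eq_zero.mp h) hne
  · exact h

theorem gp_psi_conj (x : F) : (starRingEnd ℂ) (ψ x) = ψ (-x) := by
  have h1 : ψ x * ψ (-x) = 1 := by
    rw [← gp_psi_add p F ζ hζ ψ hψ, add_neg_cancel, gp_psi_zero p F ζ hζ ψ hψ]
  have habs : ‖ψ x‖ = 1 := by
    have hζabs : ‖ζ‖ = 1 := by
      have hh : ‖ζ‖ ^ p = 1 := by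
        rw [← norm_pow, hζ.pow_eq_one, norm_one]
      have h0 : (0:ℝ) ≤ ‖ζ‖ := norm_nonneg _
      have hp0 : p ≠ 0 := (Fact.out : p.Prime).pos.ne'
      rcases lt_trichotomy (‖ζ‖) 1 with h | h | h
      · exact absurd hh (by have := pow_lt_one₀ h0 h hp0; linarith)
      · exact h
      · exact absurd hh (by have := one_lt_pow₀ h hp0; linarith)
    rw [hψ, norm_pow, hζabs, one_pow]
  rw [← Complex.inv_eq_conj habs]
  exact (eq_inv_of_mul_eq_one_left (by rw [mul_comm] at h1; exact h1)).symm

include hcard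

theorem gp_psi_sum_mul (c : F) : ∑ x : F, ψ (x * c) = if c = 0 then (q : ℂ) else 0 := by
  split_ifs with hc
  · subst hc; simp [gp_psi_zero p F ζ hζ ψ hψ, hcard]
  · rw [← gp_psi_sum p F ζ hζ ψ hψ]
    exact Fintype.sum_equiv (Equiv.mulRight₀ c hc) _ _ (fun x => rfl)

end psi

section gen
variable (q : ℕ) (F : Type) [Field F] [Fintype F] [DecidableEq F]
  (hcard : Fintype.card F = q) (hq2 : 2 ≤ q)
  (γ : F) (hγ : orderOf γ = q - 1)

include hcard hγ hq2

theorem gp_gen_image : (Finset.range (q-1)).image (γ ^ ·) = Finset.univ \ {0} := by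
  have hγ0 : γ ≠ 0 := by
    intro h
    have := pow_orderOf_eq_one γ
    rw [hγ, h, zero_pow (by omega)] at this
    exact zero_ne_one this
  have hinj : Set.InjOn (γ ^ ·) (Finset.range (q-1) : Set ℕ) := by
    intro a ha b hb hab
    exact pow_injOn_Iio_orderOf (by simpa [hγ] using ha) (by simpa [hγ] using hb) hab
  apply Finset.eq_of_subset_of_card_le
  · intro x hx
    simp only [Finset.mem_image] at hx
    obtain ⟨n, _, rfl⟩ := hx
    simp [pow_ne_zero _ hγ0]
  · rw [Finset.card_sdiff_of_subset (by simp), Finset.card_image_of_injOn hinj]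
    simp [hcard]

theorem gp_gen_sum (g : F → ℂ) :
    ∑ n ∈ Finset.range (q-1), g (γ ^ n) = (∑ x : F, g x) - g 0 := by
  have hinj : Set.InjOn (γ ^ ·) (Finset.range (q-1) : Set ℕ) := by
    intro a ha b hb hab
    exact pow_injOn_Iio_orderOf (by simpa [hγ] using ha) (by simpa [hγ] using hb) hab
  rw [← Finset.sum_image (f := g) (fun a ha b hb => hinj ha hb),
    gp_gen_image q F hcard hq2 γ hγ, Finset.sum_sdiff_eq_sub (by simp)]
  simp

theorem gp_gen_surj (x : F) (hx : x ≠ 0) : ∃ m, γ ^ m = x := by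
  have : x ∈ (Finset.range (q-1)).image (γ ^ ·) := by
    rw [gp_gen_image q F hcard hq2 γ hγ]; simp [hx]
  obtain ⟨m, _, hm⟩ := Finset.mem_image.mp this
  exact ⟨m, hm⟩

end gen

section main
variable (N e q : ℕ) (hN : 0 < N) (he : 0 < e) (hNe : N * e = q - 1) (hq2 : 2 ≤ q)
  (F : Type) [Field F] [Fintype F] [DecidableEq F]
  (γ : F) (hγ : orderOf γ = q - 1)
  (ψ : F → ℂ)
  (hψa : ∀ x y : F, ψ (x + y) = ψ x * ψ y) (hψ0 : ψ 0 = 1)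
  (hψm : ∀ c : F, ∑ x : F, ψ (x * c) = if c = 0 then (q : ℂ) else 0)
  (hgsum : ∀ g : F → ℂ, ∑ n ∈ Finset.range (q-1), g (γ ^ n) = (∑ x : F, g x) - g 0)
  (hconj : ∀ x : F, (starRingEnd ℂ) (ψ x) = ψ (-x))
  (η : ℕ → ℂ)
  (hη : ∀ a, η a = ∑ j ∈ Finset.range e, ψ (γ ^ (a + N * j)))

include hN he hNe hq2 hγ hη

theorem gp_eta_per (a : ℕ) : η (a + N) = η a := by
  have hord : γ ^ (N * e) = 1 := by rw [hNe, ← hγ, pow_orderOf_eq_one]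
  rw [hη, hη]
  have h1 : ∀ j, ψ (γ ^ (a + N + N * j)) = ψ (γ ^ (a + N * (j+1))) := by
    intro j; congr 1; ring_nf
  simp_rw [h1]
  obtain ⟨k, rfl⟩ : ∃ k, e = k + 1 := ⟨e - 1, by omega⟩
  rw [Finset.sum_range_succ' (fun j => ψ (γ ^ (a + N * j))) k, Finset.sum_range_succ]
  have : γ ^ (a + N * (k + 1)) = γ ^ (a + N * 0) := by
    rw [pow_add, pow_add, hord, mul_one]; simp
  rw [this]

theorem gp_eta_perj (a j : ℕ) : η (a + N * j) = η a := by
  induction j with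
  | zero => simp
  | succ k ih =>
    have h : a + N * (k+1) = (a + N * k) + N := by ring
    rw [h, gp_eta_per N e q hN he hNe hq2 F γ hγ ψ η hη, ih]

theorem gp_eta_mod (a : ℕ) : η a = η (a % N) := by
  conv_lhs => rw [← Nat.mod_add_div a N]
  rw [gp_eta_perj N e q hN he hNe hq2 F γ hγ ψ η hη]

include hψa hψ0 hψm hgsum

theorem gp_corr (b : ℕ) :
    ∑ a ∈ Finset.range N, η a * η (a + b)
      = ∑ t ∈ Finset.range e, ((if γ ^ (b + N * t) = -1 then (q:ℂ) else 0) - 1) := by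
  calc ∑ a ∈ Finset.range N, η a * η (a + b)
      = ∑ a ∈ Finset.range N, ∑ j ∈ Finset.range e,
          ψ (γ ^ (a + N * j)) * η ((a + N * j) + b) := by
        refine Finset.sum_congr rfl (fun a _ => ?_)
        rw [hη a, Finset.sum_mul]
        refine Finset.sum_congr rfl (fun j _ => ?_)
        congr 1
        rw [show (a + N * j) + b = (a + b) + N * j by ring,
          gp_eta_perj N e q hN he hNe hq2 F γ hγ ψ η hη]
    _ = ∑ n ∈ Finset.range (N * e), ψ (γ ^ n) * η (n + b) :=
        (gp_flatten N e hN (fun n => ψ (γ ^ n) * η (n + b))).symm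
    _ = ∑ t ∈ Finset.range e, ∑ n ∈ Finset.range (N * e),
          ψ (γ ^ n * (1 + γ ^ (b + N * t))) := by
        rw [Finset.sum_comm]
        refine Finset.sum_congr rfl (fun n _ => ?_)
        rw [hη (n + b), Finset.mul_sum]
        refine Finset.sum_congr rfl (fun t _ => ?_)
        rw [show n + b + N * t = n + (b + N * t) by ring, pow_add, ← hψa, mul_add, mul_one]
    _ = ∑ t ∈ Finset.range e, ((if (1 + γ ^ (b + N * t)) = 0 then (q:ℂ) else 0) - 1) := by
        refine Finset.sum_congr rfl (fun t _ => ?_)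
        have h := hgsum (fun x => ψ (x * (1 + γ ^ (b + N * t))))
        rw [hNe]
        rw [h, hψm, zero_mul, hψ0]
    _ = ∑ t ∈ Finset.range e, ((if γ ^ (b + N * t) = -1 then (q:ℂ) else 0) - 1) := by
        refine Finset.sum_congr rfl (fun t _ => ?_)
        congr 1
        exact if_congr ⟨fun h => by linear_combination h, fun h => by rw [h]; ring⟩ rfl rfl

include hconj

theorem gp_hS (m : ℕ) (hm : γ ^ m = -1) (hrat : ∀ a, ∃ r : ℚ, η a = (r : ℂ))
    (b : ℕ) (hb : b < N) :
    ∑ a ∈ Finset.range N, η a * η (a + b) = (if b = 0 then (q:ℂ) else 0) - e := by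
  have hshift : ∀ a : ℕ, η (a + m) = η a := by
    intro a
    have hcj : (starRingEnd ℂ) (η a) = η a := by
      obtain ⟨r, hr⟩ := hrat a
      rw [hr, map_ratCast]
    calc η (a + m) = ∑ j ∈ Finset.range e, ψ (γ ^ (a + m + N * j)) := hη _
      _ = ∑ j ∈ Finset.range e, (starRingEnd ℂ) (ψ (γ ^ (a + N * j))) := by
          refine Finset.sum_congr rfl (fun j _ => ?_)
          rw [hconj]
          congr 1
          rw [show a + m + N * j = m + (a + N * j) by ring, pow_add, hm]
          ring
      _ = (starRingEnd ℂ) (η a) := by rw [hη a, map_sum]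
      _ = η a := hcj
  calc ∑ a ∈ Finset.range N, η a * η (a + b)
      = ∑ a ∈ Finset.range N, η a * η (a + (b + m)) := by
        refine Finset.sum_congr rfl (fun a _ => ?_)
        rw [show a + (b + m) = (a + b) + m by ring, hshift]
    _ = ∑ t ∈ Finset.range e, ((if γ ^ ((b + m) + N * t) = -1 then (q:ℂ) else 0) - 1) :=
        gp_corr N e q hN he hNe hq2 F γ hγ ψ hψa hψ0 hψm hgsum η hη (b + m)
    _ = ∑ t ∈ Finset.range e, ((if b = 0 ∧ t = 0 then (q:ℂ) else 0) - 1) := by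
        refine Finset.sum_congr rfl (fun t ht => ?_)
        congr 1
        refine if_congr ?_ rfl rfl
        have hpow : γ ^ ((b + m) + N * t) = - γ ^ (b + N * t) := by
          rw [show (b + m) + N * t = m + (b + N * t) by ring, pow_add, hm]
          ring
        rw [hpow, show (-1 : F) = -(1 : F) by ring, neg_inj, ← orderOf_dvd_iff_pow_eq_one, hγ,
          ← hNe]
        constructor
        · intro hdvd
          have hlt : b + N * t < N * e := by
            have := Finset.mem_range.mp ht
            nlinarith
          have h0 := Nat.eq_zero_of_dvd_of_lt hdvd hlt
          have ht0 : t = 0 := by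
            rcases Nat.mul_eq_zero.mp (by omega : N * t = 0) with h | h
            · omega
            · exact h
          exact ⟨by omega, ht0⟩
        · rintro ⟨rfl, rfl⟩; simp
    _ = (if b = 0 then (q:ℂ) else 0) - e := by
        rw [Finset.sum_sub_distrib, Finset.sum_const, Finset.card_range, nsmul_eq_mul, mul_one]
        congr 1
        by_cases hb0 : b = 0
        · subst hb0
          simp only [true_and, if_pos]
          rw [Finset.sum_ite_eq' (Finset.range e) 0 (fun _ => (q:ℂ))]
          simp [he]
        · simp [hb0]

end main

section groupring
variable (N : ℕ) [NeZero N] (I₁ I₂ I₃ : Finset (ZMod N)) (α₁ α₂ α₃ : ℚ)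

theorem gp_combo_id (c : ZMod N → ℚ)
    (hcoef : ∀ x, (if x ∈ I₁ then α₁ else 0) + (if x ∈ I₂ then α₂ else 0)
      + (if x ∈ I₃ then α₃ else 0) = c x) :
    α₁ • (∑ a ∈ I₁, AddMonoidAlgebra.single a (1 : ℚ))
      + α₂ • (∑ a ∈ I₂, AddMonoidAlgebra.single a (1 : ℚ))
      + α₃ • (∑ a ∈ I₃, AddMonoidAlgebra.single a (1 : ℚ))
    = ∑ x : ZMod N, AddMonoidAlgebra.single x (c x) := by
  have h : ∀ (I : Finset (ZMod N)) (α : ℚ),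
      α • (∑ a ∈ I, AddMonoidAlgebra.single a (1 : ℚ))
        = ∑ x : ZMod N, AddMonoidAlgebra.single x (if x ∈ I then α else 0) := by
    intro I α
    rw [Finset.smul_sum]
    rw [← Finset.sum_subset (Finset.subset_univ I)
      (f := fun x => AddMonoidAlgebra.single x (if x ∈ I then α else 0))
      (fun x _ hx => by simp [hx])]
    refine Finset.sum_congr rfl (fun a ha => ?_)
    rw [if_pos ha, AddMonoidAlgebra.smul_single', mul_one]
  rw [h I₁ α₁, h I₂ α₂, h I₃ α₃, ← Finset.sum_add_distrib, ← Finset.sum_add_distrib]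
  refine Finset.sum_congr rfl (fun x _ => ?_)
  rw [← AddMonoidAlgebra.single_add, ← AddMonoidAlgebra.single_add, hcoef]

theorem gp_combo_neg (c : ZMod N → ℚ)
    (hcoef : ∀ x, (if x ∈ I₁ then α₁ else 0) + (if x ∈ I₂ then α₂ else 0)
      + (if x ∈ I₃ then α₃ else 0) = c x) :
    α₁ • (∑ a ∈ I₁, AddMonoidAlgebra.single (-a) (1 : ℚ))
      + α₂ • (∑ a ∈ I₂, AddMonoidAlgebra.single (-a) (1 : ℚ))
      + α₃ • (∑ a ∈ I₃, AddMonoidAlgebra.single (-a) (1 : ℚ))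
    = ∑ x : ZMod N, AddMonoidAlgebra.single (-x) (c x) := by
  have h : ∀ (I : Finset (ZMod N)) (α : ℚ),
      α • (∑ a ∈ I, AddMonoidAlgebra.single (-a) (1 : ℚ))
        = ∑ x : ZMod N, AddMonoidAlgebra.single (-x) (if x ∈ I then α else 0) := by
    intro I α
    rw [Finset.smul_sum]
    rw [← Finset.sum_subset (Finset.subset_univ I)
      (f := fun x => AddMonoidAlgebra.single (-x) (if x ∈ I then α else 0))
      (fun x _ hx => by simp [hx])]
    refine Finset.sum_congr rfl (fun a ha => ?_)
    rw [if_pos ha, AddMonoidAlgebra.smul_single', mul_one]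
  rw [h I₁ α₁, h I₂ α₂, h I₃ α₃, ← Finset.sum_add_distrib, ← Finset.sum_add_distrib]
  refine Finset.sum_congr rfl (fun x _ => ?_)
  rw [← AddMonoidAlgebra.single_add, ← AddMonoidAlgebra.single_add, hcoef]

theorem gp_prod (c : ZMod N → ℚ) :
    (∑ x : ZMod N, AddMonoidAlgebra.single x (c x))
      * (∑ y : ZMod N, AddMonoidAlgebra.single (-y) (c y))
    = ∑ b : ZMod N, AddMonoidAlgebra.single b (∑ x : ZMod N, c x * c (x - b)) := by
  rw [Finset.sum_mul_sum]
  have h1 : ∀ x : ZMod N, ∑ y : ZMod N,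
      AddMonoidAlgebra.single x (c x) * AddMonoidAlgebra.single (-y) (c y)
      = ∑ b : ZMod N, AddMonoidAlgebra.single b (c x * c (x - b)) := by
    intro x
    refine Fintype.sum_equiv (Equiv.subLeft x) _ _ (fun y => ?_)
    rw [AddMonoidAlgebra.single_mul_single]
    simp only [Equiv.subLeft_apply, sub_sub_cancel]
    rw [← sub_eq_add_neg]
  rw [Finset.sum_congr rfl (fun x _ => h1 x), Finset.sum_comm]
  refine Finset.sum_congr rfl (fun b _ => ?_)
  exact (map_sum (AddMonoidAlgebra.singleAddHom b) _ _).symm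

end groupring

/-- Lemma 2.2 / `lem_gr`.  If the Gauss periods of order `N` of `F_q`
take exactly three distinct rational values `α₁, α₂, α₃`, then in the group ring
`ℚ[Z_N]` one has
`(α₁I₁+α₂I₂+α₃I₃)(α₁I₁⁽⁻¹⁾+α₂I₂⁽⁻¹⁾+α₃I₃⁽⁻¹⁾) = q·1 - ((q-1)/N)·Z_N`. -/
theorem stmt_0
    (p f N q : ℕ) [Fact p.Prime] (hf : 0 < f) (hq : q = p ^ f)
    (hN : 2 < N) [NeZero N] (hNq : N ∣ q - 1)
    (F : Type) [Field F] [Fintype F] [Algebra (ZMod p) F]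
    (hcard : Fintype.card F = q)
    -- γ is a primitive element of F
    (γ : F) (hγ : orderOf γ = q - 1)
    -- canonical additive character ψ(x) = ζ_p^{Tr_{q/p}(x)}
    (ζ : ℂ) (hζ : IsPrimitiveRoot ζ p)
    (ψ : F → ℂ) (hψ : ∀ x, ψ x = ζ ^ (Algebra.trace (ZMod p) F x).val)
    -- Gauss periods η_a = ψ(γ^a C₀), where C₀ = ⟨γ^N⟩ has (q-1)/N elements
    (η : ℕ → ℂ)
    (hη : ∀ a, η a = ∑ j ∈ Finset.range ((q - 1) / N), ψ (γ ^ (a + N * j)))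
    -- the Gauss periods take exactly the three distinct rational values α₁, α₂, α₃
    (α₁ α₂ α₃ : ℚ)
    (h12 : α₁ ≠ α₂) (h13 : α₁ ≠ α₃) (h23 : α₂ ≠ α₃)
    (hval : {c : ℂ | ∃ a, a < N ∧ η a = c} = {(α₁ : ℂ), (α₂ : ℂ), (α₃ : ℂ)})
    -- index sets I_i ⊆ Z_N
    (I₁ I₂ I₃ : Finset (ZMod N))
    (hI₁ : ∀ x : ZMod N, x ∈ I₁ ↔ η x.val = (α₁ : ℂ))
    (hI₂ : ∀ x : ZMod N, x ∈ I₂ ↔ η x.val = (α₂ : ℂ))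
    (hI₃ : ∀ x : ZMod N, x ∈ I₃ ↔ η x.val = (α₃ : ℂ)) :
    (α₁ • (∑ a ∈ I₁, AddMonoidAlgebra.single a (1 : ℚ))
      + α₂ • (∑ a ∈ I₂, AddMonoidAlgebra.single a (1 : ℚ))
      + α₃ • (∑ a ∈ I₃, AddMonoidAlgebra.single a (1 : ℚ)))
    * (α₁ • (∑ a ∈ I₁, AddMonoidAlgebra.single (-a) (1 : ℚ))
      + α₂ • (∑ a ∈ I₂, AddMonoidAlgebra.single (-a) (1 : ℚ))
      + α₃ • (∑ a ∈ I₃, AddMonoidAlgebra.single (-a) (1 : ℚ)))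
    = (q : ℚ) • (1 : AddMonoidAlgebra ℚ (ZMod N))
      - (((q : ℚ) - 1) / N) • ∑ g : ZMod N, AddMonoidAlgebra.single g (1 : ℚ) := by
  classical
  have hp : p.Prime := Fact.out
  have hq2 : 2 ≤ q := by
    rw [hq]
    calc 2 ≤ p := hp.two_le
    _ ≤ p ^ f := Nat.le_self_pow (by omega) p
  have hN0 : 0 < N := by omega
  set e := (q - 1) / N with he_def
  have hNe : N * e = q - 1 := Nat.mul_div_cancel' hNq
  have he0 : 0 < e := by
    rcases Nat.eq_zero_or_pos e with h | h
    · rw [h] at hNe; omega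
    · exact h
  -- character facts
  have hψa := gp_psi_add p F ζ hζ ψ hψ
  have hψ0 := gp_psi_zero p F ζ hζ ψ hψ
  have hψm := gp_psi_sum_mul p q F hcard ζ hζ ψ hψ
  have hgsum := gp_gen_sum q F hcard hq2 γ hγ
  have hconj := gp_psi_conj p F ζ hζ ψ hψ
  -- values of η
  have hval' : ∀ a, a < N → (η a = (α₁:ℂ) ∨ η a = (α₂:ℂ) ∨ η a = (α₃:ℂ)) := by
    intro a ha
    have h : η a ∈ {c : ℂ | ∃ a', a' < N ∧ η a' = c} := ⟨a, ha, rfl⟩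
    rw [hval] at h
    simpa using h
  have hrat : ∀ a, ∃ r : ℚ, η a = (r : ℂ) := by
    intro a
    rw [gp_eta_mod N e q hN0 he0 hNe hq2 F γ hγ ψ η hη]
    rcases hval' (a % N) (Nat.mod_lt _ hN0) with h | h | h
    · exact ⟨α₁, h⟩
    · exact ⟨α₂, h⟩
    · exact ⟨α₃, h⟩
  obtain ⟨m, hm⟩ := gp_gen_surj q F hcard hq2 γ hγ (-1) (by
    intro h
    exact one_ne_zero (neg_eq_zero.mp h))
  have hS := gp_hS N e q hN0 he0 hNe hq2 F γ hγ ψ hψa hψ0 hψm hgsum hconj η hη m hm hrat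
  -- the coefficient function
  set c : ZMod N → ℚ := fun x => if x ∈ I₁ then α₁ else if x ∈ I₂ then α₂ else α₃ with hc_def
  have hc : ∀ x : ZMod N, ((c x : ℚ) : ℂ) = η x.val := by
    intro x
    by_cases h1 : x ∈ I₁
    · simp only [hc_def, if_pos h1]; exact ((hI₁ x).mp h1).symm
    · by_cases h2 : x ∈ I₂
      · simp only [hc_def, if_neg h1, if_pos h2]; exact ((hI₂ x).mp h2).symm
      · simp only [hc_def, if_neg h1, if_neg h2]
        rcases hval' x.val (ZMod.val_lt x) with h | h | h
        · exact absurd ((hI₁ x).mpr h) h1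
        · exact absurd ((hI₂ x).mpr h) h2
        · exact h.symm
  have hcoef : ∀ x : ZMod N, (if x ∈ I₁ then α₁ else 0) + (if x ∈ I₂ then α₂ else 0)
      + (if x ∈ I₃ then α₃ else 0) = c x := by
    intro x
    have hd12 : x ∈ I₁ → x ∉ I₂ := by
      intro h1 h2
      exact h12 (by exact_mod_cast ((hI₁ x).mp h1).symm.trans ((hI₂ x).mp h2))
    have hd13 : x ∈ I₁ → x ∉ I₃ := by
      intro h1 h3
      exact h13 (by exact_mod_cast ((hI₁ x).mp h1).symm.trans ((hI₃ x).mp h3))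
    have hd23 : x ∈ I₂ → x ∉ I₃ := by
      intro h2 h3
      exact h23 (by exact_mod_cast ((hI₂ x).mp h2).symm.trans ((hI₃ x).mp h3))
    by_cases h1 : x ∈ I₁
    · simp [hc_def, h1, hd12 h1, hd13 h1]
    · by_cases h2 : x ∈ I₂
      · simp [hc_def, h1, h2, hd23 h2]
      · have h3 : x ∈ I₃ := by
          rcases hval' x.val (ZMod.val_lt x) with h | h | h
          · exact absurd ((hI₁ x).mpr h) h1
          · exact absurd ((hI₂ x).mpr h) h2
          · exact (hI₃ x).mpr h
        simp [hc_def, h1, h2, h3]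
  -- key coefficient identity over ℚ
  have hK : ∀ b : ZMod N, (∑ x : ZMod N, c x * c (x - b))
      = (if b = 0 then (q:ℚ) else 0) - e := by
    intro b
    have hcast : ((∑ x : ZMod N, c x * c (x - b) : ℚ) : ℂ)
        = ∑ a ∈ Finset.range N, η a * η (a + b.val) := by
      push_cast
      calc ∑ x : ZMod N, ((c x : ℚ) : ℂ) * ((c (x - b) : ℚ) : ℂ)
          = ∑ y : ZMod N, ((c (y + b) : ℚ) : ℂ) * ((c y : ℚ) : ℂ) := by
            refine Fintype.sum_equiv (Equiv.subRight b) _ _ (fun x => ?_)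
            simp only [Equiv.subRight_apply, sub_add_cancel]
        _ = ∑ y : ZMod N, η y.val * η (y.val + b.val) := by
            refine Finset.sum_congr rfl (fun y _ => ?_)
            rw [hc, hc, mul_comm]
            congr 1
            rw [ZMod.val_add,
              ← gp_eta_mod N e q hN0 he0 hNe hq2 F γ hγ ψ η hη (y.val + b.val)]
        _ = ∑ a ∈ Finset.range N, η a * η (a + b.val) := by
            rw [gp_zmod_sum N (fun y : ZMod N => η y.val * η (y.val + b.val))]
            refine Finset.sum_congr rfl (fun a ha => ?_)
            rw [ZMod.val_natCast_of_lt (Finset.mem_range.mp ha)]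
    have hSb := hS b.val (ZMod.val_lt b)
    have hfin : ((∑ x : ZMod N, c x * c (x - b) : ℚ) : ℂ)
        = (((if b = 0 then (q:ℚ) else 0) - e : ℚ) : ℂ) := by
      rw [hcast, hSb]
      by_cases hb : b = 0
      · simp [hb]
      · have hb' : b.val ≠ 0 := fun h => hb ((ZMod.val_eq_zero b).mp h)
        simp [hb, hb']
    exact_mod_cast hfin
  -- assembling
  rw [gp_combo_id N I₁ I₂ I₃ α₁ α₂ α₃ c hcoef, gp_combo_neg N I₁ I₂ I₃ α₁ α₂ α₃ c hcoef,
    gp_prod N c]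
  have hq1 : ((q:ℚ) - 1) / N = (e : ℚ) := by
    have h1 : (N:ℚ) * e = (q:ℚ) - 1 := by
      have h2 : ((N * e : ℕ) : ℚ) = ((q - 1 : ℕ) : ℚ) := by rw [hNe]
      push_cast [Nat.cast_sub (by omega : 1 ≤ q)] at h2
      linarith
    rw [← h1]
    field_simp
  have hone : (q:ℚ) • (1 : AddMonoidAlgebra ℚ (ZMod N)) = AddMonoidAlgebra.single 0 (q:ℚ) := by
    rw [AddMonoidAlgebra.one_def, AddMonoidAlgebra.smul_single', mul_one]
  have hZ : (((q:ℚ) - 1) / N) • (∑ g : ZMod N, AddMonoidAlgebra.single g (1:ℚ))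
      = ∑ g : ZMod N, AddMonoidAlgebra.single g ((e : ℚ)) := by
    rw [hq1, Finset.smul_sum]
    refine Finset.sum_congr rfl (fun g _ => ?_)
    rw [AddMonoidAlgebra.smul_single', mul_one]
  rw [hone, hZ]
  have hsingle0 : AddMonoidAlgebra.single (0 : ZMod N) (q:ℚ)
      = ∑ b : ZMod N, AddMonoidAlgebra.single b (if b = 0 then (q:ℚ) else 0) := by
    rw [Finset.sum_eq_single 0 (fun g _ hg => by rw [if_neg hg]; exact AddMonoidAlgebra.single_zero g)
      (fun h => absurd (Finset.mem_univ 0) h)]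
    rw [if_pos rfl]
  rw [hsingle0, ← Finset.sum_sub_distrib]
  refine Finset.sum_congr rfl (fun b _ => ?_)
  rw [← AddMonoidAlgebra.single_sub, hK b]
end

section
/- Suppose the Gauss periods η_a, 0 ≤ a ≤ N−1, take exactly three distinct rational values α₁, α₂, α₃, and let I_i = {γ̄^a ∈ Z_N : η_a = α_i}. Then, with k = (q−1)/N: |I₁| = −(α₂α₃(q−1) + k(q−k+α₂+α₃)) / (k(α₁−α₂)(α₃−α₁)), |I₂| = −(α₁α₃(q−1) + k(q−k+α₁+α₃)) / (k(α₁−α₂)(α₂−α₃)), and |I₃| = −(α₁α₂(q−1) + k(q−k+α₁+α₂)) / (k(α₂−α₃)(α₃−α₁)). -/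
open scoped BigOperators

set_option maxHeartbeats 2000000

/-- Lemma 2.3 / `rem_sz`.  If the Gauss periods of order `N` of `F_q`
take exactly three distinct rational values `α₁, α₂, α₃`, then with `k = (q-1)/N` the
sizes of the index sets `I₁, I₂, I₃` are given by the stated rational formulas. -/
theorem stmt_1
    (p f N q : ℕ) [Fact p.Prime] (hf : 0 < f) (hq : q = p ^ f)
    (hN : 2 < N) [NeZero N] (hNq : N ∣ q - 1)
    (F : Type) [Field F] [Fintype F] [Algebra (ZMod p) F]
    (hcard : Fintype.card F = q)
    (γ : F) (hγ : orderOf γ = q - 1)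
    (ζ : ℂ) (hζ : IsPrimitiveRoot ζ p)
    (ψ : F → ℂ) (hψ : ∀ x, ψ x = ζ ^ (Algebra.trace (ZMod p) F x).val)
    (η : ℕ → ℂ)
    (hη : ∀ a, η a = ∑ j ∈ Finset.range ((q - 1) / N), ψ (γ ^ (a + N * j)))
    (α₁ α₂ α₃ : ℚ)
    (h12 : α₁ ≠ α₂) (h13 : α₁ ≠ α₃) (h23 : α₂ ≠ α₃)
    (hval : {c : ℂ | ∃ a, a < N ∧ η a = c} = {(α₁ : ℂ), (α₂ : ℂ), (α₃ : ℂ)})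
    (I₁ I₂ I₃ : Finset (ZMod N))
    (hI₁ : ∀ x : ZMod N, x ∈ I₁ ↔ η x.val = (α₁ : ℂ))
    (hI₂ : ∀ x : ZMod N, x ∈ I₂ ↔ η x.val = (α₂ : ℂ))
    (hI₃ : ∀ x : ZMod N, x ∈ I₃ ↔ η x.val = (α₃ : ℂ))
    (k : ℚ) (hk : k = ((q : ℚ) - 1) / N) :
    (I₁.card : ℚ)
        = -(α₂ * α₃ * ((q : ℚ) - 1) + k * ((q : ℚ) - k + α₂ + α₃))
            / (k * (α₁ - α₂) * (α₃ - α₁))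
    ∧ (I₂.card : ℚ)
        = -(α₁ * α₃ * ((q : ℚ) - 1) + k * ((q : ℚ) - k + α₁ + α₃))
            / (k * (α₁ - α₂) * (α₂ - α₃))
    ∧ (I₃.card : ℚ)
        = -(α₁ * α₂ * ((q : ℚ) - 1) + k * ((q : ℚ) - k + α₁ + α₂))
            / (k * (α₂ - α₃) * (α₃ - α₁)) := by
  classical
  have hp : p.Prime := Fact.out
  set K : ℕ := (q - 1) / N with hK
  have hNK : N * K = q - 1 := Nat.mul_div_cancel' hNq
  have hq2 : 2 ≤ q := by
    rw [hq]
    calc 2 = 2 ^ 1 := by norm_num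
    _ ≤ p ^ 1 := Nat.pow_le_pow_left hp.two_le 1
    _ ≤ p ^ f := Nat.pow_le_pow_right (le_trans (by norm_num) hp.two_le) hf
  have hq1 : 1 ≤ q := le_trans (by norm_num) hq2
  have hq10 : 0 < q - 1 := by omega
  have hN0 : 0 < N := by omega
  have hKpos : 0 < K := by
    have := Nat.le_of_dvd hq10 hNq
    exact Nat.div_pos this hN0
  have hγ0 : γ ≠ 0 := by
    intro h
    have h1 : γ ^ (q - 1) = 1 := hγ ▸ pow_orderOf_eq_one γ
    rw [h, zero_pow (by omega)] at h1
    exact zero_ne_one h1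
  -- the unit corresponding to γ
  set u : Fˣ := Units.mk0 γ hγ0 with hu
  have huord : orderOf u = q - 1 := by
    rw [← orderOf_units]; simpa [hu] using hγ
  have hupow : ∀ i : ℕ, ((u ^ i : Fˣ) : F) = γ ^ i := by
    intro i; simp [hu]
  -- injectivity of powers of γ below q - 1
  have hinj : Set.InjOn (fun i : ℕ => γ ^ i) (Set.Iio (q - 1)) := by
    intro i hi j hj hij
    have : (fun n : ℕ => u ^ n) i = (fun n : ℕ => u ^ n) j := by
      apply Units.ext; simpa [hupow] using hij
    exact pow_injOn_Iio_orderOf (by simpa [huord] using hi) (by simpa [huord] using hj) this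
  -- additivity of ψ
  have hζord : orderOf ζ = p := (hζ.eq_orderOf).symm
  have hψadd : ∀ x y : F, ψ (x + y) = ψ x * ψ y := by
    intro x y
    rw [hψ, hψ, hψ, ← pow_add, map_add, ZMod.val_add]
    have h1 := pow_mod_orderOf ζ ((Algebra.trace (ZMod p) F x).val + (Algebra.trace (ZMod p) F y).val)
    rw [hζord] at h1
    exact h1
  have hψ0 : ψ 0 = 1 := by rw [hψ]; simp
  -- sum of ψ over F is 0
  have hsumF : ∑ x : F, ψ x = 0 := by
    have : Module.Finite (ZMod p) F := Module.Finite.of_finite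
    have : Algebra.IsSeparable (ZMod p) F := inferInstance
    obtain ⟨b, hb⟩ := Algebra.trace_surjective (ZMod p) F 1
    have hψb : ψ b ≠ 1 := by
      rw [hψ, hb, ZMod.val_one]
      exact hζ.pow_ne_one_of_pos_of_lt (by norm_num) hp.one_lt
      
    have hmul : ψ b * ∑ x : F, ψ x = ∑ x : F, ψ x := by
      rw [Finset.mul_sum]
      exact Fintype.sum_equiv (Equiv.addLeft b) (fun x => ψ b * ψ x) ψ
        (fun x => by rw [Equiv.coe_addLeft]; exact (hψadd b x).symm)
    have h2 : (ψ b - 1) * ∑ x : F, ψ x = 0 := by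
      rw [sub_mul, one_mul, hmul, sub_self]
    rcases mul_eq_zero.mp h2 with h | h
    · exact absurd (sub_eq_zero.mp h) hψb
    · exact h
  -- sum of ψ over a multiplicative translate of the nonzero elements
  have hT : ∀ c : F, c ≠ 0 → ∑ i ∈ Finset.range (q - 1), ψ (γ ^ i * c) = -1 := by
    intro c hc
    have hinj2 : Set.InjOn (fun i : ℕ => γ ^ i * c) ↑(Finset.range (q - 1)) := by
      intro i hi j hj hij
      simp only [Finset.coe_range, Set.mem_Iio] at hi hj
      exact hinj hi hj (mul_right_cancel₀ hc hij)
    have himg : (Finset.range (q - 1)).image (fun i : ℕ => γ ^ i * c)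
        = Finset.univ.erase (0 : F) := by
      apply Finset.eq_of_subset_of_card_le
      · intro x hx
        simp only [Finset.mem_image] at hx
        obtain ⟨i, _, rfl⟩ := hx
        exact Finset.mem_erase.mpr ⟨mul_ne_zero (pow_ne_zero i hγ0) hc, Finset.mem_univ _⟩
      · rw [Finset.card_erase_of_mem (Finset.mem_univ _), Finset.card_univ, hcard,
          Finset.card_image_of_injOn hinj2, Finset.card_range]
    have h1 : ∑ i ∈ Finset.range (q - 1), ψ (γ ^ i * c)
        = ∑ x ∈ Finset.univ.erase (0 : F), ψ x := by
      rw [← himg, Finset.sum_image (fun i hi j hj hij => hinj2 hi hj hij)]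
    rw [h1, ← sub_eq_zero]
    have h2 := Finset.add_sum_erase Finset.univ ψ (Finset.mem_univ (0 : F))
    rw [hsumF, hψ0] at h2
    linear_combination h2
  -- splitting a sum over range (q-1) into a double sum
  have hprod : ∀ φ : ℕ → ℂ,
      ∑ a ∈ Finset.range N, ∑ l ∈ Finset.range K, φ (a + N * l)
        = ∑ i ∈ Finset.range (q - 1), φ i := by
    intro φ
    rw [← Finset.sum_product']
    refine Finset.sum_nbij' (fun x => x.1 + N * x.2) (fun i => (i % N, i / N)) ?_ ?_ ?_ ?_ ?_
    · rintro ⟨a, l⟩ h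
      simp only [Finset.mem_product, Finset.mem_range] at h
      rw [Finset.mem_range, ← hNK]
      calc a + N * l < N + N * l := by omega
      _ = N * (l + 1) := by ring
      _ ≤ N * K := Nat.mul_le_mul_left N h.2
    · intro i hi
      rw [Finset.mem_range, ← hNK] at hi
      simp only [Finset.mem_product, Finset.mem_range]
      exact ⟨Nat.mod_lt _ hN0, Nat.div_lt_iff_lt_mul hN0 |>.mpr (by rw [mul_comm]; exact hi)⟩
    · rintro ⟨a, l⟩ h
      simp only [Finset.mem_product, Finset.mem_range] at h
      have h1 : (a + N * l) % N = a := by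
        rw [Nat.add_mul_mod_self_left, Nat.mod_eq_of_lt h.1]
      have h2 : (a + N * l) / N = l := by
        rw [Nat.add_mul_div_left _ _ hN0, Nat.div_eq_of_lt h.1, zero_add]
      simp [h1, h2]
    · intro i _
      simp [Nat.mod_add_div]
    · rintro ⟨a, l⟩ _
      rfl
  -- the first power sum
  have hsum1 : ∑ a ∈ Finset.range N, η a = -1 := by
    have := hprod (fun i => ψ (γ ^ i))
    calc ∑ a ∈ Finset.range N, η a
        = ∑ a ∈ Finset.range N, ∑ l ∈ Finset.range K, ψ (γ ^ (a + N * l)) := by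
          exact Finset.sum_congr rfl fun a _ => hη a
      _ = ∑ i ∈ Finset.range (q - 1), ψ (γ ^ i) := hprod (fun i => ψ (γ ^ i))
      _ = -1 := by
          have := hT 1 one_ne_zero
          simpa using this
  -- conjugation of ψ
  have hζc : ζ * (starRingEnd ℂ) ζ = 1 := by
    have h1 : ‖ζ‖ = 1 := by
      have hxp : ‖ζ‖ ^ p = 1 := by
        rw [← norm_pow, hζ.pow_eq_one, norm_one]
      rcases lt_trichotomy ‖ζ‖ 1 with h | h | h
      · have : ‖ζ‖ ^ p < 1 := by
          first
          | exact pow_lt_one₀ (norm_nonneg ζ) h hp.ne_zero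
          | exact pow_lt_one (norm_nonneg ζ) h hp.ne_zero
        exact absurd hxp this.ne
      · exact h
      · have : 1 < ‖ζ‖ ^ p := by
          first
          | exact one_lt_pow₀ h hp.ne_zero
          | exact one_lt_pow h hp.ne_zero
        exact absurd hxp this.ne'
    rw [Complex.mul_conj, Complex.normSq_eq_norm_sq]
    rw [h1]
    norm_num
  have hψc : ∀ x : F, ψ x * (starRingEnd ℂ) (ψ x) = 1 := by
    intro x
    rw [hψ, map_pow, ← mul_pow, hζc, one_pow]
  have hψne : ∀ x : F, ψ x ≠ 0 := by
    intro x h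
    have := hψc x
    rw [h, zero_mul] at this
    exact zero_ne_one this
  have hconj : ∀ x : F, (starRingEnd ℂ) (ψ x) = ψ (-x) := by
    intro x
    have h1 : ψ x * ψ (-x) = 1 := by
      rw [← hψadd, add_neg_cancel, hψ0]
    exact mul_left_cancel₀ (hψne x) ((hψc x).trans h1.symm)
  -- cyclic reindexing of a sum over range K
  have hre : ∀ l : ℕ, l < K → ∀ φ : ℕ → ℂ,
      ∑ j ∈ Finset.range K, φ j = ∑ j ∈ Finset.range K, φ ((j + l) % K) := by
    intro l hl φ
    refine Finset.sum_nbij' (fun a => (a + (K - l)) % K) (fun b => (b + l) % K)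
      ?_ ?_ ?_ ?_ ?_
    · intro a _; exact Finset.mem_range.mpr (Nat.mod_lt _ hKpos)
    · intro b _; exact Finset.mem_range.mpr (Nat.mod_lt _ hKpos)
    · intro a ha
      rw [Finset.mem_range] at ha
      show ((a + (K - l)) % K + l) % K = a
      rw [Nat.mod_add_mod]
      have h1 : a + (K - l) + l = a + K := by omega
      rw [h1, Nat.add_mod_right, Nat.mod_eq_of_lt ha]
    · intro b hb
      rw [Finset.mem_range] at hb
      show ((b + l) % K + (K - l)) % K = b
      rw [Nat.mod_add_mod]
      have h1 : b + l + (K - l) = b + K := by omega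
      rw [h1, Nat.add_mod_right, Nat.mod_eq_of_lt hb]
    · intro a ha
      rw [Finset.mem_range] at ha
      show φ a = φ (((a + (K - l)) % K + l) % K)
      congr 1
      rw [Nat.mod_add_mod]
      have h1 : a + (K - l) + l = a + K := by omega
      rw [h1, Nat.add_mod_right, Nat.mod_eq_of_lt ha]
  -- exponent shift
  have hshift : ∀ a l j : ℕ, γ ^ (a + N * ((j + l) % K)) = γ ^ (a + N * l) * γ ^ (N * j) := by
    intro a l j
    have hmod : (a + N * ((j + l) % K)) % (q - 1) = (a + N * (j + l)) % (q - 1) := by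
      have h1 : (j + l) % K ≡ j + l [MOD K] := Nat.mod_modEq _ _
      have h2 : N * ((j + l) % K) ≡ N * (j + l) [MOD N * K] := h1.mul_left' N
      rw [hNK] at h2
      exact (h2.add_left a)
    have e1 := pow_mod_orderOf γ (a + N * ((j + l) % K))
    have e2 := pow_mod_orderOf γ (a + N * (j + l))
    rw [hγ] at e1 e2
    rw [← e1, hmod, e2, ← pow_add]
    congr 1
    ring
  -- the second power sum
  have hsum2 : ∑ a ∈ Finset.range N, η a * (starRingEnd ℂ) (η a) = (q : ℂ) - K := by
    have step1 : ∀ a : ℕ, η a * (starRingEnd ℂ) (η a)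
        = ∑ l ∈ Finset.range K, ∑ j ∈ Finset.range K,
            ψ (γ ^ (a + N * l) * (γ ^ (N * j) - 1)) := by
      intro a
      rw [hη, map_sum, mul_comm, Finset.sum_mul_sum]
      refine Finset.sum_congr rfl fun l hl => ?_
      rw [Finset.mem_range] at hl
      rw [hre l hl (fun j => (starRingEnd ℂ) (ψ (γ ^ (a + N * l))) * ψ (γ ^ (a + N * j)))]
      refine Finset.sum_congr rfl fun j _ => ?_
      rw [hshift a l j, hconj, ← hψadd]
      congr 1
      ring
    calc ∑ a ∈ Finset.range N, η a * (starRingEnd ℂ) (η a)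
        = ∑ a ∈ Finset.range N, ∑ l ∈ Finset.range K, ∑ j ∈ Finset.range K,
            ψ (γ ^ (a + N * l) * (γ ^ (N * j) - 1)) :=
          Finset.sum_congr rfl fun a _ => step1 a
      _ = ∑ j ∈ Finset.range K, ∑ a ∈ Finset.range N, ∑ l ∈ Finset.range K,
            ψ (γ ^ (a + N * l) * (γ ^ (N * j) - 1)) := by
          rw [show (∑ a ∈ Finset.range N, ∑ l ∈ Finset.range K, ∑ j ∈ Finset.range K,
              ψ (γ ^ (a + N * l) * (γ ^ (N * j) - 1)))
              = ∑ a ∈ Finset.range N, ∑ j ∈ Finset.range K, ∑ l ∈ Finset.range K,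
              ψ (γ ^ (a + N * l) * (γ ^ (N * j) - 1)) from
            Finset.sum_congr rfl fun a _ => Finset.sum_comm]
          exact Finset.sum_comm
      _ = ∑ j ∈ Finset.range K, ∑ i ∈ Finset.range (q - 1),
            ψ (γ ^ i * (γ ^ (N * j) - 1)) :=
          Finset.sum_congr rfl fun j _ =>
            hprod (fun i => ψ (γ ^ i * (γ ^ (N * j) - 1)))
      _ = ∑ j ∈ Finset.range K, (if j = 0 then ((q : ℂ) - 1) else -1) := by
          refine Finset.sum_congr rfl fun j hj => ?_
          rw [Finset.mem_range] at hj
          by_cases h0 : j = 0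
          · subst h0
            rw [if_pos rfl]
            have : ∀ i : ℕ, ψ (γ ^ i * (γ ^ (N * 0) - 1)) = 1 := by
              intro i
              simp [hψ0]
            rw [Finset.sum_congr rfl fun i _ => this i, Finset.sum_const, Finset.card_range,
              nsmul_eq_mul, mul_one, Nat.cast_sub hq1, Nat.cast_one]
          · rw [if_neg h0]
            apply hT
            apply sub_ne_zero.mpr
            apply pow_ne_one_of_lt_orderOf
            · exact Nat.mul_ne_zero (by omega) h0
            · rw [hγ, ← hNK]
              exact Nat.mul_lt_mul_left hN0 |>.mpr hj
      _ = (q : ℂ) - K := by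
          rw [← Finset.add_sum_erase _ _ (Finset.mem_range.mpr hKpos), if_pos rfl]
          have he : ∑ j ∈ (Finset.range K).erase 0, (if j = 0 then ((q : ℂ) - 1) else -1)
              = ∑ j ∈ (Finset.range K).erase 0, (-1 : ℂ) :=
            Finset.sum_congr rfl fun j hj => if_neg (Finset.mem_erase.mp hj).1
          rw [he, Finset.sum_const, Finset.card_erase_of_mem (Finset.mem_range.mpr hKpos),
            Finset.card_range, nsmul_eq_mul, Nat.cast_sub hKpos, Nat.cast_one]
          ring
  -- values of η below N
  have hval' : ∀ a : ℕ, a < N → η a = (α₁ : ℂ) ∨ η a = (α₂ : ℂ) ∨ η a = (α₃ : ℂ) := by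
    intro a ha
    have : η a ∈ {c : ℂ | ∃ b, b < N ∧ η b = c} := ⟨a, ha, rfl⟩
    rw [hval] at this
    simpa using this
  have hconjη : ∀ a : ℕ, a < N → (starRingEnd ℂ) (η a) = η a := by
    intro a ha
    rcases hval' a ha with h | h | h <;>
      (rw [h]; exact map_ratCast (starRingEnd ℂ) _)
  -- sums over ZMod N versus range N
  have hzsum : ∀ φ : ℕ → ℂ, ∑ x : ZMod N, φ x.val = ∑ a ∈ Finset.range N, φ a := by
    intro φ
    refine Finset.sum_nbij' (fun x : ZMod N => x.val) (fun a => (a : ZMod N))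
      ?_ ?_ ?_ ?_ ?_
    · intro x _; exact Finset.mem_range.mpr (ZMod.val_lt x)
    · intro a _; exact Finset.mem_univ _
    · intro x _; exact ZMod.natCast_rightInverse x
    · intro a ha; exact ZMod.val_cast_of_lt (Finset.mem_range.mp ha)
    · intro x _; rfl
  -- the partition
  have hdj12 : Disjoint I₁ I₂ := by
    rw [Finset.disjoint_left]
    intro x h1 h2
    rw [hI₁ x] at h1
    rw [hI₂ x] at h2
    exact h12 (Rat.cast_injective (h1.symm.trans h2))
  have hdj13 : Disjoint I₁ I₃ := by
    rw [Finset.disjoint_left]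
    intro x h1 h2
    rw [hI₁ x] at h1
    rw [hI₃ x] at h2
    exact h13 (Rat.cast_injective (h1.symm.trans h2))
  have hdj23 : Disjoint I₂ I₃ := by
    rw [Finset.disjoint_left]
    intro x h1 h2
    rw [hI₂ x] at h1
    rw [hI₃ x] at h2
    exact h23 (Rat.cast_injective (h1.symm.trans h2))
  have hdj : Disjoint I₁ (I₂ ∪ I₃) := Finset.disjoint_union_right.mpr ⟨hdj12, hdj13⟩
  have huniv : I₁ ∪ (I₂ ∪ I₃) = Finset.univ := by
    apply Finset.eq_univ_of_forall
    intro x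
    rcases hval' x.val (ZMod.val_lt x) with h | h | h
    · exact Finset.mem_union.mpr (Or.inl ((hI₁ x).mpr h))
    · exact Finset.mem_union.mpr (Or.inr (Finset.mem_union.mpr (Or.inl ((hI₂ x).mpr h))))
    · exact Finset.mem_union.mpr (Or.inr (Finset.mem_union.mpr (Or.inr ((hI₃ x).mpr h))))
  -- splitting sums over the partition
  have hsplit : ∀ φ : ZMod N → ℂ,
      ∑ x : ZMod N, φ x = ∑ x ∈ I₁, φ x + ∑ x ∈ I₂, φ x + ∑ x ∈ I₃, φ x := by
    intro φ
    rw [← huniv, Finset.sum_union hdj, Finset.sum_union hdj23, add_assoc]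
  -- equation 0 : cardinalities
  have e0 : (I₁.card : ℚ) + I₂.card + I₃.card = N := by
    have hnat : I₁.card + I₂.card + I₃.card = N := by
      rw [add_assoc, ← Finset.card_union_of_disjoint hdj23,
        ← Finset.card_union_of_disjoint hdj, huniv, Finset.card_univ, ZMod.card]
    exact_mod_cast hnat
  -- equation 1
  have e1C : (α₁ : ℂ) * I₁.card + (α₂ : ℂ) * I₂.card + (α₃ : ℂ) * I₃.card = -1 := by
    have h1 : ∑ x : ZMod N, η x.val = -1 := by
      rw [hzsum (fun a => η a)]
      exact hsum1
    rw [hsplit (fun x => η x.val)] at h1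
    rw [Finset.sum_congr rfl (fun x hx => (hI₁ x).mp hx),
      Finset.sum_congr rfl (fun x hx => (hI₂ x).mp hx),
      Finset.sum_congr rfl (fun x hx => (hI₃ x).mp hx),
      Finset.sum_const, Finset.sum_const, Finset.sum_const,
      nsmul_eq_mul, nsmul_eq_mul, nsmul_eq_mul] at h1
    rw [mul_comm ((α₁ : ℂ)) _, mul_comm ((α₂ : ℂ)) _, mul_comm ((α₃ : ℂ)) _]
    exact h1
  have e1 : α₁ * I₁.card + α₂ * I₂.card + α₃ * I₃.card = -1 := by
    exact_mod_cast e1C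
  -- equation 2
  have e2C : (α₁ : ℂ) ^ 2 * I₁.card + (α₂ : ℂ) ^ 2 * I₂.card + (α₃ : ℂ) ^ 2 * I₃.card
      = (q : ℂ) - K := by
    have h1 : ∑ x : ZMod N, η x.val * η x.val = (q : ℂ) - K := by
      rw [hzsum (fun a => η a * η a)]
      rw [← hsum2]
      exact Finset.sum_congr rfl fun a ha =>
        congrArg (η a * ·) (hconjη a (Finset.mem_range.mp ha)).symm
    rw [hsplit (fun x => η x.val * η x.val)] at h1
    have r1 : ∑ x ∈ I₁, η x.val * η x.val = I₁.card * (α₁ : ℂ) ^ 2 := by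
      rw [Finset.sum_congr rfl (fun x hx => by rw [(hI₁ x).mp hx, ← pow_two]),
        Finset.sum_const, nsmul_eq_mul]
    have r2 : ∑ x ∈ I₂, η x.val * η x.val = I₂.card * (α₂ : ℂ) ^ 2 := by
      rw [Finset.sum_congr rfl (fun x hx => by rw [(hI₂ x).mp hx, ← pow_two]),
        Finset.sum_const, nsmul_eq_mul]
    have r3 : ∑ x ∈ I₃, η x.val * η x.val = I₃.card * (α₃ : ℂ) ^ 2 := by
      rw [Finset.sum_congr rfl (fun x hx => by rw [(hI₃ x).mp hx, ← pow_two]),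
        Finset.sum_const, nsmul_eq_mul]
    rw [r1, r2, r3] at h1
    rw [mul_comm ((α₁ : ℂ) ^ 2) _, mul_comm ((α₂ : ℂ) ^ 2) _, mul_comm ((α₃ : ℂ) ^ 2) _]
    exact h1
  have hKk : (K : ℚ) = k := by
    rw [hk, hK, Nat.cast_div hNq (by exact_mod_cast hN0.ne'), Nat.cast_sub hq1, Nat.cast_one]
  have e2 : α₁ ^ 2 * I₁.card + α₂ ^ 2 * I₂.card + α₃ ^ 2 * I₃.card = (q : ℚ) - k := by
    rw [← hKk]
    exact_mod_cast e2C
  -- final algebra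
  have hq2' : (2 : ℚ) ≤ (q : ℚ) := by exact_mod_cast hq2
  have hNk : (N : ℚ) * k = (q : ℚ) - 1 := by
    rw [hk, mul_div_cancel₀]
    exact_mod_cast hN0.ne'
  have hkne : k ≠ 0 := by
    intro h
    rw [h, mul_zero] at hNk
    linarith
  have d12 : α₁ - α₂ ≠ 0 := sub_ne_zero.mpr h12
  have d23 : α₂ - α₃ ≠ 0 := sub_ne_zero.mpr h23
  have d31 : α₃ - α₁ ≠ 0 := sub_ne_zero.mpr (Ne.symm h13)
  refine ⟨?_, ?_, ?_⟩
  · rw [eq_div_iff (by exact mul_ne_zero (mul_ne_zero hkne d12) d31)]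
    linear_combination (-k) * e2 + k * (α₂ + α₃) * e1 + (-k * α₂ * α₃) * e0 + (-α₂ * α₃) * hNk
  · rw [eq_div_iff (by exact mul_ne_zero (mul_ne_zero hkne d12) d23)]
    linear_combination (-k) * e2 + (k * (α₁ + α₃)) * e1 + (-k * α₁ * α₃) * e0 + (-α₁ * α₃) * hNk
  · rw [eq_div_iff (by exact mul_ne_zero (mul_ne_zero hkne d23) d31)]
    linear_combination (-k) * e2 + k * (α₁ + α₂) * e1 + (-k * α₁ * α₂) * e0 + (-α₁ * α₂) * hNk
end

section
/- Assume the Gauss periods η_a, 0 ≤ a ≤ N−1, take exactly three rational values α₁, α₂, α₃ forming an arithmetic progression, say α₁ − α₂ = −t < 0 and α₃ − α₂ = t > 0. Then t is a power of p, and with k = (q−1)/N: |I₁| = (N(α₂² + α₂t + k) + 2α₂ − k + t + 1)/(2t²), |I₃| = (N(α₂² − α₂t + k) + 2α₂ − k − t + 1)/(2t²), |I₂| = (N(t² − α₂² − k) − 1 − 2α₂ + k)/t², and |I₁| − |I₃| = (α₂N + 1)/t. Moreover, in ℚ[Z_N], (I₁ − I₃)(I₁ − I₃)^{(−1)} = (q/t²)·1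 + ((α₂²N + 2α₂ − k)/t²)·Z_N. -/
open scoped BigOperators
open Finset

lemma aux_per {M : Type*} [AddCommGroup M] (F : ℕ → M) (k : ℕ)
    (h : ∀ m, F (m + k) = F m) (j : ℕ) :
    ∑ l ∈ range k, F (j + l) = ∑ l ∈ range k, F l := by
  induction j with
  | zero => simp
  | succ j ih =>
    have key : (∑ l ∈ range k, F (j + 1 + l)) + F (j + 0) =
        (∑ l ∈ range k, F (j + l)) + F (j + k) := by
      have h1 : ∑ l ∈ range (k+1), F (j + l) = (∑ l ∈ range k, F (j + l)) + F (j + k) :=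
        Finset.sum_range_succ _ _
      have h2 : ∑ l ∈ range (k+1), F (j + l) = (∑ l ∈ range k, F (j + (l+1))) + F (j + 0) :=
        Finset.sum_range_succ' _ _
      rw [← h1, h2]
      congr 1
      apply Finset.sum_congr rfl
      intro l _
      congr 1
      omega
    have hjk : F (j + k) = F j := h j
    rw [hjk] at key
    have : ∑ l ∈ range k, F (j + 1 + l) = ∑ l ∈ range k, F (j + l) := by
      have := key
      simp only [Nat.add_zero] at this
      exact add_right_cancel this
    rw [this, ih]

lemma aux_grid {M : Type*} [AddCommMonoid M] (N k : ℕ) (G : ℕ → M) :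
    ∑ a ∈ range N, ∑ j ∈ range k, G (a + N * j) = ∑ e ∈ range (N * k), G e := by
  induction k with
  | zero => simp
  | succ k ih =>
    have : N * (k + 1) = N * k + N := by ring
    rw [this, Finset.sum_range_add]
    rw [← ih]
    rw [← Finset.sum_add_distrib]
    apply Finset.sum_congr rfl
    intro a _
    rw [Finset.sum_range_succ]
    congr 1
    congr 1
    omega


lemma aux_gamma_ne {F : Type*} [Field F] [Fintype F] (γ : F)
    (h : orderOf γ = Fintype.card F - 1) : γ ≠ 0 := by
  have hq1 : 1 < Fintype.card F := Fintype.one_lt_card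
  intro hγ
  rw [hγ] at h
  have := pow_orderOf_eq_one (0 : F)
  rw [zero_pow (by rw [h]; omega : orderOf (0:F) ≠ 0)] at this
  exact zero_ne_one this

lemma aux_pow_bij {F : Type*} [Field F] [Fintype F] [DecidableEq F] (γ : F)
    (h : orderOf γ = Fintype.card F - 1) :
    ∀ x : F, x ≠ 0 → ∃! e, e < Fintype.card F - 1 ∧ γ ^ e = x := by
  have hq1 : 1 < Fintype.card F := Fintype.one_lt_card
  have hpos : 0 < Fintype.card F - 1 := by omega
  have hγ0 : γ ≠ 0 := aux_gamma_ne γ h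
  set u : Fˣ := Units.mk0 γ hγ0 with hu
  have huv : (u : F) = γ := rfl
  have hou : orderOf u = Fintype.card F - 1 := by
    rw [← orderOf_units, huv, h]
  have hcardu : Fintype.card Fˣ = Fintype.card F - 1 := Fintype.card_units F
  have htop : Subgroup.zpowers u = ⊤ := by
    apply Subgroup.eq_top_of_card_eq
    rw [Nat.card_zpowers, hou, Nat.card_eq_fintype_card, hcardu]
  intro x hx
  set xu : Fˣ := Units.mk0 x hx with hxu
  have hmem : xu ∈ Subgroup.zpowers u := htop ▸ Subgroup.mem_top xu
  have hmem' : xu ∈ Submonoid.powers u := mem_powers_iff_mem_zpowers.mpr hmem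
  obtain ⟨n, hn⟩ := hmem'
  have hn' : u ^ n = xu := hn
  have hmain : u ^ (n % (Fintype.card F - 1)) = xu := by
    rw [← hou, pow_mod_orderOf, hn']
  refine ⟨n % (Fintype.card F - 1), ⟨Nat.mod_lt _ hpos, ?_⟩, ?_⟩
  · calc γ ^ (n % (Fintype.card F - 1)) = ((u ^ (n % (Fintype.card F - 1)) : Fˣ) : F) := by
          rw [Units.val_pow_eq_pow_val, huv]
      _ = x := by rw [hmain]; rfl
  · rintro e ⟨he, hex⟩
    have h1 : u ^ e = xu := by
      ext
      rw [Units.val_pow_eq_pow_val, huv, hex]; rfl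
    exact pow_injOn_Iio_orderOf (x := u)
      (by rw [hou]; exact he) (by rw [hou]; exact Nat.mod_lt _ hpos)
      (by show u ^ e = u ^ (n % (Fintype.card F - 1)); rw [h1, hmain])

lemma aux_pow_sum {F : Type*} [Field F] [Fintype F] [DecidableEq F]
    {M : Type*} [AddCommGroup M] (γ : F)
    (h : orderOf γ = Fintype.card F - 1) (G : F → M) :
    ∑ e ∈ Finset.range (Fintype.card F - 1), G (γ ^ e) = (∑ x : F, G x) - G 0 := by
  have hγ0 : γ ≠ 0 := aux_gamma_ne γ h
  have key : ∑ e ∈ Finset.range (Fintype.card F - 1), G (γ ^ e)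
      = ∑ x ∈ Finset.univ.erase (0 : F), G x := by
    apply Finset.sum_bij (fun e _ => γ ^ e)
    · intro e he
      exact Finset.mem_erase.mpr ⟨pow_ne_zero e hγ0, Finset.mem_univ _⟩
    · intro e1 he1 e2 he2 heq
      obtain ⟨e, he, hu⟩ := aux_pow_bij γ h (γ ^ e1) (pow_ne_zero e1 hγ0)
      have h1 := hu e1 ⟨Finset.mem_range.mp he1, rfl⟩
      have h2 := hu e2 ⟨Finset.mem_range.mp he2, heq.symm⟩
      rw [h1, h2]
    · intro x hx
      rw [Finset.mem_erase] at hx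
      obtain ⟨e, ⟨he, hex⟩, _⟩ := aux_pow_bij γ h x hx.1
      exact ⟨e, Finset.mem_range.mpr he, hex⟩
    · intro e _; rfl
  rw [key]
  have h2 := Finset.sum_erase_add Finset.univ G (Finset.mem_univ (0 : F))
  exact eq_sub_of_add_eq h2

noncomputable def Efun {G : Type*} [AddCommGroup G] [Fintype G] (h : G → ℚ) :
    AddMonoidAlgebra ℚ G :=
  ∑ a : G, AddMonoidAlgebra.single a (h a)

lemma Efun_mul {G : Type*} [AddCommGroup G] [Fintype G] [DecidableEq G] (h₁ h₂ : G → ℚ) :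
    Efun h₁ * Efun h₂ = Efun (fun s => ∑ a : G, h₁ a * h₂ (s - a)) := by
  unfold Efun
  rw [Fintype.sum_mul_sum]
  have step : ∀ a : G, ∑ b : G, AddMonoidAlgebra.single (a + b) (h₁ a * h₂ b)
      = ∑ s : G, AddMonoidAlgebra.single s (h₁ a * h₂ (s - a)) := by
    intro a
    apply Fintype.sum_equiv (Equiv.addLeft a)
    intro b
    simp [Equiv.addLeft]
  calc ∑ a : G, ∑ b : G, AddMonoidAlgebra.single a (h₁ a) * AddMonoidAlgebra.single b (h₂ b)
      = ∑ a : G, ∑ b : G, AddMonoidAlgebra.single (a + b) (h₁ a * h₂ b) := by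
        simp [AddMonoidAlgebra.single_mul_single]
    _ = ∑ a : G, ∑ s : G, AddMonoidAlgebra.single s (h₁ a * h₂ (s - a)) := by
        exact Finset.sum_congr rfl fun a _ => step a
    _ = ∑ s : G, ∑ a : G, AddMonoidAlgebra.single s (h₁ a * h₂ (s - a)) := Finset.sum_comm
    _ = ∑ s : G, AddMonoidAlgebra.single s (∑ a : G, h₁ a * h₂ (s - a)) := by
        refine Finset.sum_congr rfl fun s _ => ?_
        exact (map_sum (AddMonoidAlgebra.singleAddHom (R := ℚ) s) _ _).symm

lemma Efun_congr {G : Type*} [AddCommGroup G] [Fintype G] (h₁ h₂ : G → ℚ)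
    (h : ∀ a, h₁ a = h₂ a) : Efun h₁ = Efun h₂ := by
  unfold Efun; exact Finset.sum_congr rfl fun a _ => by rw [h a]

lemma Efun_indicator {G : Type*} [AddCommGroup G] [Fintype G] [DecidableEq G] (S : Finset G) :
    Efun (fun a => if a ∈ S then (1:ℚ) else 0) = ∑ a ∈ S, AddMonoidAlgebra.single a (1:ℚ) := by
  unfold Efun
  have : ∀ a : G, AddMonoidAlgebra.single a (if a ∈ S then (1:ℚ) else 0)
      = if a ∈ S then AddMonoidAlgebra.single a (1:ℚ) else 0 := by
    intro a; split <;> simp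
  calc ∑ a : G, AddMonoidAlgebra.single a ((fun a => if a ∈ S then (1:ℚ) else 0) a)
      = ∑ a : G, (if a ∈ S then AddMonoidAlgebra.single a (1:ℚ) else 0) :=
        Finset.sum_congr rfl fun a _ => this a
    _ = ∑ a ∈ Finset.univ ∩ S, AddMonoidAlgebra.single a (1:ℚ) := Finset.sum_ite_mem _ _ _
    _ = ∑ a ∈ S, AddMonoidAlgebra.single a (1:ℚ) := by rw [Finset.univ_inter]

lemma Efun_sub {G : Type*} [AddCommGroup G] [Fintype G] (h₁ h₂ : G → ℚ) :
    Efun (fun a => h₁ a - h₂ a) = Efun h₁ - Efun h₂ := by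
  unfold Efun
  rw [← Finset.sum_sub_distrib]
  exact Finset.sum_congr rfl fun a _ => AddMonoidAlgebra.single_sub a (h₁ a) (h₂ a)

lemma Efun_add {G : Type*} [AddCommGroup G] [Fintype G] (h₁ h₂ : G → ℚ) :
    Efun (fun a => h₁ a + h₂ a) = Efun h₁ + Efun h₂ := by
  unfold Efun
  rw [← Finset.sum_add_distrib]
  exact Finset.sum_congr rfl fun a _ => AddMonoidAlgebra.single_add a (h₁ a) (h₂ a)

lemma Efun_neg_indicator {G : Type*} [AddCommGroup G] [Fintype G] [DecidableEq G] (S : Finset G) :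
    Efun (fun a => if -a ∈ S then (1:ℚ) else 0) = ∑ a ∈ S, AddMonoidAlgebra.single (-a) (1:ℚ) := by
  unfold Efun
  calc ∑ a : G, AddMonoidAlgebra.single a ((fun a => if -a ∈ S then (1:ℚ) else 0) a)
      = ∑ a : G, AddMonoidAlgebra.single (-a) (if a ∈ S then (1:ℚ) else 0) := by
        apply Fintype.sum_equiv (Equiv.neg G)
        intro a
        simp [Equiv.neg]
        congr
    _ = ∑ a : G, (if a ∈ S then AddMonoidAlgebra.single (-a) (1:ℚ) else 0) := by
        refine Finset.sum_congr rfl fun a _ => ?_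
        split <;> simp
    _ = ∑ a ∈ Finset.univ ∩ S, AddMonoidAlgebra.single (-a) (1:ℚ) := Finset.sum_ite_mem _ _ _
    _ = ∑ a ∈ S, AddMonoidAlgebra.single (-a) (1:ℚ) := by rw [Finset.univ_inter]

lemma Efun_delta {G : Type*} [AddCommGroup G] [Fintype G] [DecidableEq G] (v : ℚ) :
    Efun (fun s => if s = 0 then v else 0) = AddMonoidAlgebra.single (0:G) v := by
  unfold Efun
  calc ∑ a : G, AddMonoidAlgebra.single a ((fun s => if s = 0 then v else 0) a)
      = ∑ a : G, (if a = 0 then AddMonoidAlgebra.single a v else 0) := by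
        refine Finset.sum_congr rfl fun a _ => ?_
        by_cases h : a = 0 <;> simp [h]
    _ = AddMonoidAlgebra.single (0:G) v := by
        rw [Finset.sum_ite_eq' Finset.univ (0:G) (fun a => AddMonoidAlgebra.single a v)]
        simp

lemma Efun_const {G : Type*} [AddCommGroup G] [Fintype G] (c : ℚ) :
    Efun (fun _ => c) = ∑ g : G, AddMonoidAlgebra.single g c := rfl

/-- Lemma 2.6 / `AP_size`.  If the Gauss periods of order `N` of `F_q`
take exactly three rational values in arithmetic progression `α₂ - t, α₂, α₂ + t`
(`t > 0`), then `t` is a power of `p`, the sizes of the index sets are given by the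
stated formulas, and `(I₁-I₃)(I₁-I₃)⁽⁻¹⁾ = (q/t²)·1 + ((α₂²N+2α₂-k)/t²)·Z_N`
in `ℚ[Z_N]`. -/
theorem stmt_3
    (p f N q : ℕ) [Fact p.Prime] (hf : 0 < f) (hq : q = p ^ f)
    (hN : 2 < N) [NeZero N] (hNq : N ∣ q - 1)
    (F : Type) [Field F] [Fintype F] [Algebra (ZMod p) F]
    (hcard : Fintype.card F = q)
    (γ : F) (hγ : orderOf γ = q - 1)
    (ζ : ℂ) (hζ : IsPrimitiveRoot ζ p)
    (ψ : F → ℂ) (hψ : ∀ x, ψ x = ζ ^ (Algebra.trace (ZMod p) F x).val)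
    (η : ℕ → ℂ)
    (hη : ∀ a, η a = ∑ j ∈ Finset.range ((q - 1) / N), ψ (γ ^ (a + N * j)))
    (α₁ α₂ α₃ : ℚ)
    (h12 : α₁ ≠ α₂) (h13 : α₁ ≠ α₃) (h23 : α₂ ≠ α₃)
    (hval : {c : ℂ | ∃ a, a < N ∧ η a = c} = {(α₁ : ℂ), (α₂ : ℂ), (α₃ : ℂ)})
    (I₁ I₂ I₃ : Finset (ZMod N))
    (hI₁ : ∀ x : ZMod N, x ∈ I₁ ↔ η x.val = (α₁ : ℂ))
    (hI₂ : ∀ x : ZMod N, x ∈ I₂ ↔ η x.val = (α₂ : ℂ))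
    (hI₃ : ∀ x : ZMod N, x ∈ I₃ ↔ η x.val = (α₃ : ℂ))
    -- the three values form an arithmetic progression with common difference t > 0
    (t : ℕ) (ht : 0 < t)
    (hα12 : α₁ - α₂ = -(t : ℚ)) (hα32 : α₃ - α₂ = (t : ℚ))
    (k : ℚ) (hk : k = ((q : ℚ) - 1) / N) :
    (∃ θ : ℕ, t = p ^ θ)
    ∧ (I₁.card : ℚ)
        = ((N : ℚ) * (α₂ ^ 2 + α₂ * t + k) + 2 * α₂ - k + t + 1) / (2 * (t : ℚ) ^ 2)
    ∧ (I₃.card : ℚ)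
        = ((N : ℚ) * (α₂ ^ 2 - α₂ * t + k) + 2 * α₂ - k - t + 1) / (2 * (t : ℚ) ^ 2)
    ∧ (I₂.card : ℚ)
        = ((N : ℚ) * ((t : ℚ) ^ 2 - α₂ ^ 2 - k) - 1 - 2 * α₂ + k) / (t : ℚ) ^ 2
    ∧ (I₁.card : ℚ) - (I₃.card : ℚ) = (α₂ * N + 1) / t
    ∧ ((∑ a ∈ I₁, AddMonoidAlgebra.single a (1 : ℚ))
          - (∑ a ∈ I₃, AddMonoidAlgebra.single a (1 : ℚ)))
      * ((∑ a ∈ I₁, AddMonoidAlgebra.single (-a) (1 : ℚ))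
          - (∑ a ∈ I₃, AddMonoidAlgebra.single (-a) (1 : ℚ)))
      = ((q : ℚ) / (t : ℚ) ^ 2) • (1 : AddMonoidAlgebra ℚ (ZMod N))
        + ((α₂ ^ 2 * N + 2 * α₂ - k) / (t : ℚ) ^ 2)
            • ∑ g : ZMod N, AddMonoidAlgebra.single g (1 : ℚ) := by
  classical
  have hp : p.Prime := Fact.out
  haveI : NeZero p := ⟨hp.pos.ne'⟩
  haveI : Fact (1 < p) := ⟨hp.one_lt⟩
  have hq2 : 2 ≤ q := by
    rw [hq]
    calc 2 = 2^1 := (pow_one 2).symm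
    _ ≤ p^f := Nat.pow_le_pow_left hp.two_le f |>.trans' (by
        exact Nat.pow_le_pow_right (by omega) (by omega))
  have hN0 : 0 < N := by omega
  set kn := (q - 1) / N with hkn_def
  have hknN : N * kn = q - 1 := Nat.mul_div_cancel' hNq
  have hkn_pos : 0 < kn := Nat.div_pos (Nat.le_of_dvd (by omega) hNq) hN0
  have hγ' : orderOf γ = Fintype.card F - 1 := by rw [hcard]; exact hγ
  have hγ0 : γ ≠ 0 := aux_gamma_ne γ hγ'
  -- basic ψ facts
  have hζp : ζ ^ p = 1 := hζ.pow_eq_one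
  have hζmod : ∀ m : ℕ, ζ ^ (m % p) = ζ ^ m := by
    intro m
    conv_rhs => rw [← Nat.div_add_mod m p]
    rw [pow_add, pow_mul, hζp, one_pow, one_mul]
  have hψ0 : ψ 0 = 1 := by
    rw [hψ, map_zero, ZMod.val_zero, pow_zero]
  have hψadd : ∀ x y : F, ψ (x + y) = ψ x * ψ y := by
    intro x y
    rw [hψ, hψ, hψ, map_add, ZMod.val_add, hζmod, pow_add]
  have hψsum : ∑ x : F, ψ x = 0 := by
    haveI : Algebra.IsAlgebraic (ZMod p) F := Algebra.IsAlgebraic.of_finite _ _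
    obtain ⟨y, hy⟩ := Algebra.trace_surjective (ZMod p) F 1
    have hψy : ψ y = ζ := by rw [hψ, hy, ZMod.val_one, pow_one]
    have h2 : ζ * ∑ x : F, ψ x = ∑ x : F, ψ x := by
      calc ζ * ∑ x : F, ψ x = ∑ x : F, ψ (y + x) := by
            rw [Finset.mul_sum]
            exact Finset.sum_congr rfl fun x _ => by rw [hψadd, hψy]
        _ = ∑ x : F, ψ x := Equiv.sum_comp (Equiv.addLeft y) ψ
    have hζ1 : ζ ≠ 1 := hζ.ne_one hp.one_lt
    have h3 : (ζ - 1) * ∑ x : F, ψ x = 0 := by linear_combination h2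
    rcases mul_eq_zero.mp h3 with h | h
    · exact absurd (by linear_combination h) hζ1
    · exact h
  have hψsum_mul : ∀ c : F, ∑ x : F, ψ (x * c) = if c = 0 then (q : ℂ) else 0 := by
    intro c
    by_cases hc : c = 0
    · rw [if_pos hc, hc]
      have : ∀ x : F, ψ (x * 0) = 1 := fun x => by rw [mul_zero, hψ0]
      rw [Finset.sum_congr rfl fun x _ => this x, Finset.sum_const, Finset.card_univ, hcard]
      simp
    · rw [if_neg hc, ← hψsum]
      exact Equiv.sum_comp (Equiv.mulRight₀ c hc) ψ
  have hgamma_sum : ∀ c : F,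
      ∑ e ∈ Finset.range (q - 1), ψ (γ ^ e * c) = (if c = 0 then (q : ℂ) else 0) - 1 := by
    intro c
    have := aux_pow_sum γ hγ' (fun x => ψ (x * c))
    rw [hcard] at this
    rw [this, hψsum_mul c, zero_mul, hψ0]
  -- η facts
  have hηper : ∀ a, η (a + N) = η a := by
    intro a
    rw [hη, hη]
    have hper : ∀ m, (fun m => ψ (γ ^ (a + N * m))) (m + kn)
        = (fun m => ψ (γ ^ (a + N * m))) m := by
      intro m
      simp only []
      have h1 : γ ^ (a + N * (m + kn)) = γ ^ (a + N * m) * γ ^ (N * kn) := by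
        rw [← pow_add]; congr 1; ring
      rw [h1, hknN, ← hγ, pow_orderOf_eq_one, mul_one]
    calc ∑ j ∈ range kn, ψ (γ ^ (a + N + N * j))
        = ∑ j ∈ range kn, (fun m => ψ (γ ^ (a + N * m))) (1 + j) := by
          apply Finset.sum_congr rfl
          intro j _
          simp only []
          congr 2
          ring
      _ = ∑ j ∈ range kn, ψ (γ ^ (a + N * j)) :=
          aux_per (fun m => ψ (γ ^ (a + N * m))) kn hper 1
  have hηmod : ∀ a, η a = η (a % N) := by
    have key : ∀ n a, η (a + N * n) = η a := by
      intro n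
      induction n with
      | zero => intro a; simp
      | succ n ih =>
        intro a
        have h1 : a + N * (n + 1) = (a + N * n) + N := by ring
        rw [h1, hηper, ih]
    intro a
    conv_lhs => rw [← Nat.mod_add_div a N]
    rw [key]
  have hsum_eta : ∑ a ∈ Finset.range N, η a = -1 := by
    have h1 : ∑ a ∈ range N, η a = ∑ a ∈ range N, ∑ j ∈ range kn, ψ (γ ^ (a + N * j)) :=
      Finset.sum_congr rfl fun a _ => hη a
    have h2 := aux_grid N kn (fun e => ψ (γ ^ e))
    rw [h1, h2, hknN]
    have h3 := aux_pow_sum γ hγ' ψ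
    rw [hcard] at h3
    rw [h3, hψsum, hψ0]
    ring
  -- the unique discrete log of -1
  have hneg1 : (-1 : F) ≠ 0 := by
    simp
  obtain ⟨e₀, ⟨he₀lt, he₀⟩, he₀uniq⟩ := by
    have := aux_pow_bij γ hγ' (-1 : F) hneg1
    rw [hcard] at this
    exact this
  set s₀ := e₀ % N with hs₀_def
  set l₀ := e₀ / N with hl₀_def
  have he₀dec : s₀ + N * l₀ = e₀ := Nat.mod_add_div e₀ N
  have hs₀lt : s₀ < N := Nat.mod_lt _ hN0
  have hl₀lt : l₀ < kn := by
    apply Nat.div_lt_of_lt_mul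
    omega
  -- correlation sums
  set S : ℕ → ℂ := fun s => ∑ a ∈ Finset.range N, η a * η (a + s) with hS_def
  have hS : ∀ s, S s =
      ∑ l ∈ Finset.range kn, ((if γ ^ (s + N * l) = -1 then (q : ℂ) else 0) - 1) := by
    intro s
    have step1 : ∀ a, η a * η (a + s)
        = ∑ j ∈ range kn, ∑ l ∈ range kn, ψ (γ ^ (a + N * j) * (1 + γ ^ (s + N * l))) := by
      intro a
      rw [hη a, hη (a + s), Finset.sum_mul_sum]
      apply Finset.sum_congr rfl
      intro j _
      have hper : ∀ m, (fun m => ψ (γ ^ (a + N * j)) * ψ (γ ^ (a + s + N * m))) (m + kn)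
          = (fun m => ψ (γ ^ (a + N * j)) * ψ (γ ^ (a + s + N * m))) m := by
        intro m
        simp only []
        have h1 : γ ^ (a + s + N * (m + kn)) = γ ^ (a + s + N * m) * γ ^ (N * kn) := by
          rw [← pow_add]; congr 1; ring
        rw [h1, hknN, ← hγ, pow_orderOf_eq_one, mul_one]
      calc ∑ j' ∈ range kn, ψ (γ ^ (a + N * j)) * ψ (γ ^ (a + s + N * j'))
          = ∑ l ∈ range kn, ψ (γ ^ (a + N * j)) * ψ (γ ^ (a + s + N * (j + l))) :=
            (aux_per (fun m => ψ (γ ^ (a + N * j)) * ψ (γ ^ (a + s + N * m))) kn hper j).symm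
        _ = ∑ l ∈ range kn, ψ (γ ^ (a + N * j) * (1 + γ ^ (s + N * l))) := by
            apply Finset.sum_congr rfl
            intro l _
            rw [← hψadd]
            congr 1
            have h2 : a + s + N * (j + l) = (a + N * j) + (s + N * l) := by ring
            rw [h2, pow_add]
            ring
    have step2 : S s = ∑ l ∈ range kn, ∑ a ∈ range N, ∑ j ∈ range kn,
        ψ (γ ^ (a + N * j) * (1 + γ ^ (s + N * l))) := by
      rw [hS_def]
      simp only []
      rw [Finset.sum_congr rfl fun a _ => step1 a]
      rw [Finset.sum_congr rfl fun a (_ : a ∈ range N) => Finset.sum_comm]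
      exact Finset.sum_comm
    rw [step2]
    apply Finset.sum_congr rfl
    intro l _
    have h3 := aux_grid N kn (fun e => ψ (γ ^ e * (1 + γ ^ (s + N * l))))
    rw [h3, hknN, hgamma_sum]
    congr 1
    apply if_congr _ rfl rfl
    constructor
    · intro h
      linear_combination h
    · intro h
      linear_combination h
  have hcnt : ∀ s, s < N →
      (Finset.range kn).filter (fun l => γ ^ (s + N * l) = (-1 : F))
        = if s = s₀ then {l₀} else ∅ := by
    intro s hs
    have hlt : ∀ l, l < kn → s + N * l < q - 1 := by
      intro l hl
      have h1 : N * l ≤ N * (kn - 1) := Nat.mul_le_mul_left N (by omega)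
      have h2 : N * (kn - 1) + N = N * kn := by
        rw [← Nat.mul_succ]
        congr 1
        omega
      omega
    ext l
    rw [Finset.mem_filter, Finset.mem_range]
    by_cases hss : s = s₀
    · rw [if_pos hss, Finset.mem_singleton]
      constructor
      · rintro ⟨hl, hγl⟩
        have he : s + N * l = e₀ := he₀uniq (s + N * l) ⟨hlt l hl, hγl⟩
        have h2 : N * l = N * l₀ := by omega
        exact Nat.eq_of_mul_eq_mul_left hN0 h2
      · intro h
        subst h
        refine ⟨hl₀lt, ?_⟩
        rw [hss, he₀dec]
        exact he₀
    · rw [if_neg hss]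
      simp only [Finset.notMem_empty, iff_false, not_and]
      intro hl hγl
      have he : s + N * l = e₀ := he₀uniq (s + N * l) ⟨hlt l hl, hγl⟩
      apply hss
      rw [hs₀_def, ← he, Nat.add_mul_mod_self_left]
      exact (Nat.mod_eq_of_lt hs).symm
  have hSval : ∀ s, s < N → S s = (if s = s₀ then (q : ℂ) else 0) - (kn : ℂ) := by
    intro s hs
    rw [hS s, Finset.sum_sub_distrib, ← Finset.sum_filter, hcnt s hs]
    by_cases hss : s = s₀
    · rw [if_pos hss, if_pos hss, Finset.sum_singleton, Finset.sum_const, Finset.card_range,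
        nsmul_eq_mul, mul_one]
    · rw [if_neg hss, if_neg hss, Finset.sum_empty, Finset.sum_const, Finset.card_range,
        nsmul_eq_mul, mul_one]
  -- conjugation and reality
  have hψconj : ∀ x : F, (starRingEnd ℂ) (ψ x) = ψ (-x) := by
    have hζ0 : ζ ≠ 0 := by
      intro h
      rw [h, zero_pow hp.pos.ne'] at hζp
      exact zero_ne_one hζp
    have hnsq : (starRingEnd ℂ) ζ * ζ = 1 := by
      have h1 : ‖ζ‖ ^ p = 1 := by
        rw [← norm_pow, hζp, norm_one]
      have habs : ‖ζ‖ = 1 := by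
        rcases (pow_eq_one_iff_cases).mp h1 with h | h | h
        · exact absurd h hp.pos.ne'
        · exact h
        · linarith [norm_nonneg ζ, h.1]
      have := Complex.mul_conj ζ
      rw [Complex.normSq_eq_norm_sq, habs] at this
      rw [mul_comm] at this
      simpa using this
    intro x
    have hne : ψ x ≠ 0 := by
      rw [hψ]
      exact pow_ne_zero _ hζ0
    apply mul_right_cancel₀ hne
    have hL : (starRingEnd ℂ) (ψ x) * ψ x = 1 := by
      rw [hψ, map_pow, ← mul_pow, hnsq, one_pow]
    have hR : ψ (-x) * ψ x = 1 := by
      rw [← hψadd, neg_add_cancel, hψ0]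
    rw [hL, hR]
  have hηconj : ∀ a, (starRingEnd ℂ) (η a) = η (a + s₀) := by
    intro a
    rw [hη a, hη (a + s₀), map_sum]
    have h1 : ∀ j, (starRingEnd ℂ) (ψ (γ ^ (a + N * j)))
        = ψ (γ ^ ((a + s₀) + N * (l₀ + j))) := by
      intro j
      rw [hψconj]
      congr 1
      have h2 : γ ^ ((a + s₀) + N * (l₀ + j)) = γ ^ e₀ * γ ^ (a + N * j) := by
        rw [← pow_add]
        congr 1
        rw [Nat.mul_add]
        omega
      rw [h2, he₀, neg_one_mul]
    rw [Finset.sum_congr rfl fun j _ => h1 j]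
    have hper : ∀ m, (fun m => ψ (γ ^ ((a + s₀) + N * m))) (m + kn)
        = (fun m => ψ (γ ^ ((a + s₀) + N * m))) m := by
      intro m
      simp only []
      have h3 : γ ^ ((a + s₀) + N * (m + kn)) = γ ^ ((a + s₀) + N * m) * γ ^ (N * kn) := by
        rw [← pow_add]; congr 1; ring
      rw [h3, hknN, ← hγ, pow_orderOf_eq_one, mul_one]
    exact aux_per (fun m => ψ (γ ^ ((a + s₀) + N * m))) kn hper l₀
  have hηreal : ∀ a, (starRingEnd ℂ) (η a) = η a := by
    intro a
    rw [hηmod a]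
    have hmem : η (a % N) ∈ {c : ℂ | ∃ b, b < N ∧ η b = c} :=
      ⟨a % N, Nat.mod_lt _ hN0, rfl⟩
    rw [hval] at hmem
    rcases hmem with h | h | h <;> rw [h] <;> exact map_ratCast _ _
  have hs₀0 : s₀ = 0 := by
    by_contra hss
    have h1 : S s₀ = (q : ℂ) - kn := by rw [hSval s₀ hs₀lt, if_pos rfl]
    have h2 : S 0 = -(kn : ℂ) := by
      rw [hSval 0 (by omega), if_neg (fun h => hss h.symm), zero_sub]
    have h3 : S s₀ = S 0 := by
      rw [hS_def]
      simp only []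
      apply Finset.sum_congr rfl
      intro a _
      rw [← hηconj a, hηreal a, Nat.add_zero]
    rw [h1, h2] at h3
    have h4 : (q : ℂ) = 0 := by linear_combination h3
    have h5 : q = 0 := by exact_mod_cast h4
    omega
  have hS0 : ∀ s, s < N → S s = (if s = 0 then (q : ℂ) else 0) - (kn : ℂ) := by
    intro s hs
    rw [hSval s hs, hs₀0]
  -- transfer to ZMod N
  have htrans : ∀ φ : ℕ → ℂ, ∑ a ∈ Finset.range N, φ a = ∑ x : ZMod N, φ x.val := by
    intro φ
    refine Finset.sum_nbij' (fun a => ((a : ℕ) : ZMod N)) (fun x => x.val) ?_ ?_ ?_ ?_ ?_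
    · intro a _
      exact Finset.mem_univ _
    · intro x _
      exact Finset.mem_range.mpr (ZMod.val_lt x)
    · intro a ha
      exact ZMod.val_cast_of_lt (Finset.mem_range.mp ha)
    · intro x _
      exact ZMod.natCast_rightInverse x
    · intro a ha
      rw [ZMod.val_cast_of_lt (Finset.mem_range.mp ha)]
  have M1C : ∑ x : ZMod N, η x.val = -1 := by
    rw [← htrans, hsum_eta]
  have RC : ∀ s : ZMod N, ∑ x : ZMod N, η x.val * η ((x + s).val)
      = (if s = 0 then (q : ℂ) else 0) - (kn : ℂ) := by
    intro s
    have step : ∀ x : ZMod N, η ((x + s).val) = η (x.val + s.val) := by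
      intro x
      rw [hηmod (x.val + s.val), ← ZMod.val_add]
    calc ∑ x : ZMod N, η x.val * η ((x + s).val)
        = ∑ x : ZMod N, η x.val * η (x.val + s.val) :=
          Finset.sum_congr rfl fun x _ => by rw [step]
      _ = ∑ a ∈ range N, η a * η (a + s.val) :=
          (htrans (fun a => η a * η (a + s.val))).symm
      _ = (if s = 0 then (q : ℂ) else 0) - (kn : ℂ) := by
          have h1 := hS0 s.val (ZMod.val_lt s)
          rw [hS_def] at h1
          simp only [] at h1
          rw [h1]
          congr 1
          exact if_congr (ZMod.val_eq_zero s) rfl rfl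
  -- partition
  have hd12 : ∀ a : ZMod N, a ∈ I₁ → a ∉ I₂ := by
    intro a h1 h2
    exact h12 (Rat.cast_injective (α := ℂ) (((hI₁ a).mp h1).symm.trans ((hI₂ a).mp h2)))
  have hd13 : ∀ a : ZMod N, a ∈ I₁ → a ∉ I₃ := by
    intro a h1 h2
    exact h13 (Rat.cast_injective (α := ℂ) (((hI₁ a).mp h1).symm.trans ((hI₃ a).mp h2)))
  have hd23 : ∀ a : ZMod N, a ∈ I₂ → a ∉ I₃ := by
    intro a h1 h2
    exact h23 (Rat.cast_injective (α := ℂ) (((hI₂ a).mp h1).symm.trans ((hI₃ a).mp h2)))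
  have hcover : ∀ a : ZMod N, a ∈ I₁ ∨ a ∈ I₂ ∨ a ∈ I₃ := by
    intro a
    have hmem : η a.val ∈ {c : ℂ | ∃ b, b < N ∧ η b = c} := ⟨a.val, ZMod.val_lt a, rfl⟩
    rw [hval] at hmem
    rcases hmem with h | h | h
    · exact Or.inl ((hI₁ a).mpr h)
    · exact Or.inr (Or.inl ((hI₂ a).mpr h))
    · exact Or.inr (Or.inr ((hI₃ a).mpr h))
  -- the rational indicator function
  set gq : ZMod N → ℚ := fun a => (if a ∈ I₁ then 1 else 0) - (if a ∈ I₃ then 1 else 0)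
    with hgq_def
  have hfQ : ∀ a : ZMod N, η a.val = ((α₂ - t * gq a : ℚ) : ℂ) := by
    intro a
    rcases hcover a with h | h | h
    · rw [(hI₁ a).mp h]
      norm_cast
      simp only [hgq_def, if_pos h, if_neg (hd13 a h)]
      linarith [hα12]
    · rw [(hI₂ a).mp h]
      norm_cast
      simp only [hgq_def, if_neg (fun h1 => hd12 a h1 h), if_neg (hd23 a h)]
      ring
    · rw [(hI₃ a).mp h]
      norm_cast
      simp only [hgq_def, if_neg (fun h1 => hd13 a h1 h), if_pos h]
      linarith [hα32]
  have htQ0 : (t : ℚ) ≠ 0 := Nat.cast_ne_zero.mpr (by omega)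
  have hNQ0 : (N : ℚ) ≠ 0 := Nat.cast_ne_zero.mpr (by omega)
  have hknk : (kn : ℚ) = k := by
    rw [hk, hkn_def]
    rw [Nat.cast_div hNq hNQ0]
    congr 1
    push_cast [Nat.cast_sub (by omega : 1 ≤ q)]
    ring
  have hqk : (q : ℚ) = N * k + 1 := by
    have : (N : ℚ) * k = q - 1 := by
      rw [hk]
      field_simp
    linarith [this]
  -- rational moments
  have M1 : ∑ a : ZMod N, (α₂ - t * gq a) = -1 := by
    have : ((∑ a : ZMod N, (α₂ - t * gq a) : ℚ) : ℂ) = -1 := by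
      push_cast
      rw [← M1C]
      apply Finset.sum_congr rfl
      intro a _
      rw [hfQ a]
      push_cast
      ring
    exact_mod_cast this
  set GQ : ZMod N → ℚ := fun s => ∑ a : ZMod N, gq a * gq (a + s) with hGQ_def
  set d : ℚ := ∑ a : ZMod N, gq a with hd_def
  have Rration : ∀ s : ZMod N, ∑ a : ZMod N, (α₂ - t * gq a) * (α₂ - t * gq (a + s))
      = (if s = 0 then (q : ℚ) else 0) - k := by
    intro s
    have hcast : ((∑ a : ZMod N, (α₂ - t * gq a) * (α₂ - t * gq (a + s)) : ℚ) : ℂ)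
        = (if s = 0 then (q : ℂ) else 0) - (kn : ℂ) := by
      push_cast
      rw [← RC s]
      apply Finset.sum_congr rfl
      intro a _
      rw [hfQ a, hfQ (a + s)]
      push_cast
      ring
    have h2 : (((if s = 0 then (q : ℚ) else 0) - k : ℚ) : ℂ)
        = (if s = 0 then (q : ℂ) else 0) - (kn : ℂ) := by
      rw [← hknk]
      push_cast [apply_ite (fun r : ℚ => (r : ℂ))]
      ring
    apply Rat.cast_injective (α := ℂ)
    rw [hcast, h2]
  have hshift : ∀ s : ZMod N, ∑ a : ZMod N, gq (a + s) = d := by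
    intro s
    exact Equiv.sum_comp (Equiv.addRight s) gq
  have hexpand : ∀ s : ZMod N, ∑ a : ZMod N, (α₂ - t * gq a) * (α₂ - t * gq (a + s))
      = N * α₂ ^ 2 - 2 * α₂ * t * d + t ^ 2 * GQ s := by
    intro s
    have hpt : ∀ a : ZMod N, (α₂ - t * gq a) * (α₂ - t * gq (a + s))
        = α₂ ^ 2 - α₂ * t * gq (a + s) - α₂ * t * gq a + t ^ 2 * (gq a * gq (a + s)) :=
      fun a => by ring
    calc ∑ a : ZMod N, (α₂ - t * gq a) * (α₂ - t * gq (a + s))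
        = ∑ a : ZMod N, (α₂ ^ 2 - α₂ * t * gq (a + s) - α₂ * t * gq a
            + t ^ 2 * (gq a * gq (a + s))) := Finset.sum_congr rfl fun a _ => hpt a
      _ = (∑ _a : ZMod N, α₂ ^ 2) - α₂ * t * (∑ a : ZMod N, gq (a + s))
            - α₂ * t * (∑ a : ZMod N, gq a) + t ^ 2 * (∑ a : ZMod N, gq a * gq (a + s)) := by
          rw [Finset.sum_add_distrib, Finset.sum_sub_distrib, Finset.sum_sub_distrib,
            Finset.mul_sum, Finset.mul_sum, Finset.mul_sum]
      _ = N * α₂ ^ 2 - 2 * α₂ * t * d + t ^ 2 * GQ s := by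
          rw [hshift s, ← hd_def, Finset.sum_const, Finset.card_univ, ZMod.card,
            nsmul_eq_mul]
          have hfold : (∑ a : ZMod N, gq a * gq (a + s)) = GQ s := by
            simp only [hGQ_def]
          rw [hfold]
          ring
  have hdlin : N * α₂ - t * d = -1 := by
    have h1 : ∑ a : ZMod N, (α₂ - t * gq a) = N * α₂ - t * d := by
      rw [Finset.sum_sub_distrib, ← Finset.mul_sum, ← hd_def, Finset.sum_const,
        Finset.card_univ, ZMod.card, nsmul_eq_mul]
    rw [h1] at M1
    exact M1
  have hGQv : ∀ s : ZMod N, (t : ℚ) ^ 2 * GQ s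
      = (if s = 0 then (q : ℚ) else 0) + N * α₂ ^ 2 + 2 * α₂ - k := by
    intro s
    have h1 := Rration s
    rw [hexpand s] at h1
    have h2 : (t : ℚ) * d = N * α₂ + 1 := by linarith [hdlin]
    by_cases hs : s = 0
    · rw [if_pos hs] at h1 ⊢
      linear_combination h1 + 2 * α₂ * h2
    · rw [if_neg hs] at h1 ⊢
      linear_combination h1 + 2 * α₂ * h2
  -- card identities
  have hsum_ind : ∀ J : Finset (ZMod N),
      ∑ a : ZMod N, (if a ∈ J then (1:ℚ) else 0) = J.card := by
    intro J
    rw [Finset.sum_ite_mem, Finset.univ_inter, Finset.sum_const, nsmul_eq_mul, mul_one]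
  have hdcard : d = (I₁.card : ℚ) - (I₃.card : ℚ) := by
    rw [hd_def, hgq_def]
    rw [Finset.sum_sub_distrib, hsum_ind I₁, hsum_ind I₃]
  have hGQ0 : GQ 0 = (I₁.card : ℚ) + (I₃.card : ℚ) := by
    have hpt : ∀ a : ZMod N, gq a * gq (a + 0)
        = (if a ∈ I₁ then (1:ℚ) else 0) + (if a ∈ I₃ then (1:ℚ) else 0) := by
      intro a
      rw [add_zero]
      simp only [hgq_def]
      by_cases h1 : a ∈ I₁
      · rw [if_pos h1, if_neg (hd13 a h1)]; ring
      · by_cases h3 : a ∈ I₃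
        · rw [if_neg h1, if_pos h3]; ring
        · rw [if_neg h1, if_neg h3]; ring
    have hstep : GQ 0 = ∑ a : ZMod N, ((if a ∈ I₁ then (1:ℚ) else 0)
        + (if a ∈ I₃ then (1:ℚ) else 0)) := by
      simp only [hGQ_def]
      exact Finset.sum_congr rfl fun a _ => hpt a
    rw [hstep, Finset.sum_add_distrib, hsum_ind I₁, hsum_ind I₃]
  have hcardsum : (I₁.card : ℚ) + (I₂.card : ℚ) + (I₃.card : ℚ) = N := by
    have huniv : I₁ ∪ I₂ ∪ I₃ = Finset.univ := by
      apply Finset.eq_univ_of_forall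
      intro a
      rcases hcover a with h | h | h <;> simp [Finset.mem_union, h]
    have hdj12 : Disjoint I₁ I₂ := Finset.disjoint_left.mpr fun {a} h1 h2 => hd12 a h1 h2
    have hdj3 : Disjoint (I₁ ∪ I₂) I₃ := by
      rw [Finset.disjoint_left]
      intro a ha h3
      rcases Finset.mem_union.mp ha with h | h
      · exact hd13 a h h3
      · exact hd23 a h h3
    have hcards : N = I₁.card + I₂.card + I₃.card := by
      rw [← Finset.card_union_of_disjoint hdj12, ← Finset.card_union_of_disjoint hdj3,
        huniv, Finset.card_univ, ZMod.card]
    exact_mod_cast hcards.symm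
  -- cleared-denominator equations
  have eqA : ((I₁.card : ℚ) - (I₃.card : ℚ)) * t = N * α₂ + 1 := by
    rw [← hdcard]
    linarith [hdlin]
  have eqB : ((I₁.card : ℚ) + (I₃.card : ℚ)) * t ^ 2
      = (q : ℚ) + N * α₂ ^ 2 + 2 * α₂ - k := by
    have := hGQv 0
    rw [if_pos rfl, hGQ0] at this
    linarith [this]
  have ht2 : (2 : ℚ) * (t : ℚ) ^ 2 ≠ 0 := by positivity
  have ht2' : ((t : ℚ)) ^ 2 ≠ 0 := pow_ne_zero 2 htQ0
  -- goal 1 : t is a power of p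
  have goal1 : ∃ θ : ℕ, t = p ^ θ := by
    set gz : ZMod N → ℤ := fun a => (if a ∈ I₁ then 1 else 0) - (if a ∈ I₃ then 1 else 0)
      with hgz_def
    have hgz : ∀ a : ZMod N, ((gz a : ℤ) : ℚ) = gq a := by
      intro a
      simp only [hgz_def, hgq_def]
      push_cast
      split_ifs <;> norm_num
    haveI : Fact (1 < N) := ⟨by omega⟩
    have hone : (1 : ZMod N) ≠ 0 := one_ne_zero
    have hGz : ∀ s : ZMod N, GQ s = ((∑ a : ZMod N, gz a * gz (a + s) : ℤ) : ℚ) := by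
      intro s
      simp only [hGQ_def]
      push_cast
      exact Finset.sum_congr rfl fun a _ => by rw [hgz, hgz]
    have key : ((t : ℚ)) ^ 2 * (GQ 0 - GQ 1) = q := by
      rw [mul_sub, hGQv 0, hGQv 1, if_pos rfl, if_neg hone]
      ring
    have hzq : (q : ℚ) = (t : ℚ) ^ 2
        * (((∑ a : ZMod N, gz a * gz (a + 0)) - (∑ a : ZMod N, gz a * gz (a + 1)) : ℤ) : ℚ) := by
      rw [← key, hGz 0, hGz 1]
      push_cast
      ring
    have hzq' : (q : ℤ) = (t : ℤ) ^ 2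
        * ((∑ a : ZMod N, gz a * gz (a + 0)) - (∑ a : ZMod N, gz a * gz (a + 1))) := by
      exact_mod_cast hzq
    have hdvd : (t : ℤ) ∣ (q : ℤ) :=
      ⟨(t : ℤ) * ((∑ a : ZMod N, gz a * gz (a + 0)) - (∑ a : ZMod N, gz a * gz (a + 1))),
        by rw [hzq']; ring⟩
    have hdvdn : t ∣ q := Int.natCast_dvd_natCast.mp hdvd
    rw [hq] at hdvdn
    obtain ⟨θ, _, hθ⟩ := (Nat.dvd_prime_pow hp).mp hdvdn
    exact ⟨θ, hθ⟩
  refine ⟨goal1, ?_, ?_, ?_, ?_, ?_⟩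
  · rw [eq_div_iff ht2]
    linear_combination eqB + (t : ℚ) * eqA + hqk
  · rw [eq_div_iff ht2]
    linear_combination eqB - (t : ℚ) * eqA + hqk
  · rw [eq_div_iff ht2']
    linear_combination (t : ℚ) ^ 2 * hcardsum - eqB - hqk
  · rw [eq_div_iff htQ0]
    linear_combination eqA
  · -- group ring identity
    have f1 : (∑ a ∈ I₁, AddMonoidAlgebra.single a (1:ℚ))
        - (∑ a ∈ I₃, AddMonoidAlgebra.single a (1:ℚ)) = Efun gq := by
      have h1 : Efun gq = Efun (fun a => if a ∈ I₁ then (1:ℚ) else 0)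
          - Efun (fun a => if a ∈ I₃ then (1:ℚ) else 0) := by
        rw [← Efun_sub]
      rw [h1, Efun_indicator, Efun_indicator]
    have f2 : (∑ a ∈ I₁, AddMonoidAlgebra.single (-a) (1:ℚ))
        - (∑ a ∈ I₃, AddMonoidAlgebra.single (-a) (1:ℚ)) = Efun (fun a => gq (-a)) := by
      have h1 : Efun (fun a => gq (-a)) = Efun (fun a => if -a ∈ I₁ then (1:ℚ) else 0)
          - Efun (fun a => if -a ∈ I₃ then (1:ℚ) else 0) := by
        rw [← Efun_sub]
      rw [h1, Efun_neg_indicator, Efun_neg_indicator]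
    rw [f1, f2]
    have hcongr : ∀ s : ZMod N, ∑ a : ZMod N, gq a * gq (-(s - a))
        = (if s = 0 then (q : ℚ) / (t : ℚ) ^ 2 else 0)
          + (α₂ ^ 2 * N + 2 * α₂ - k) / (t : ℚ) ^ 2 := by
      intro s
      have hcoef : ∑ a : ZMod N, gq a * gq (-(s - a)) = GQ (-s) := by
        simp only [hGQ_def]
        apply Finset.sum_congr rfl
        intro a _
        congr 1
        rw [neg_sub, sub_eq_add_neg]
      have hval2 := hGQv (-s)
      simp only [neg_eq_zero] at hval2
      rw [hcoef]
      by_cases hs : s = 0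
      · rw [if_pos hs] at hval2 ⊢
        field_simp
        linarith [hval2]
      · rw [if_neg hs] at hval2 ⊢
        field_simp
        linarith [hval2]
    have r1 : ((q : ℚ) / (t : ℚ) ^ 2) • (1 : AddMonoidAlgebra ℚ (ZMod N))
        = AddMonoidAlgebra.single (0 : ZMod N) ((q : ℚ) / (t : ℚ) ^ 2) := by
      rw [AddMonoidAlgebra.one_def]
      exact (AddMonoidAlgebra.smul_single' _ _ _).trans (by rw [mul_one])
    have r2 : ((α₂ ^ 2 * N + 2 * α₂ - k) / (t : ℚ) ^ 2)
          • ∑ g : ZMod N, AddMonoidAlgebra.single g (1:ℚ)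
        = ∑ g : ZMod N, AddMonoidAlgebra.single g ((α₂ ^ 2 * N + 2 * α₂ - k) / (t : ℚ) ^ 2) := by
      rw [Finset.smul_sum]
      exact Finset.sum_congr rfl fun g _ => (AddMonoidAlgebra.smul_single' _ _ _).trans (by rw [mul_one])
    calc Efun gq * Efun (fun a => gq (-a))
        = Efun (fun s => ∑ a : ZMod N, gq a * gq (-(s - a))) := Efun_mul _ _
      _ = Efun (fun s => (if s = 0 then (q : ℚ) / (t : ℚ) ^ 2 else 0)
            + (α₂ ^ 2 * N + 2 * α₂ - k) / (t : ℚ) ^ 2) := Efun_congr _ _ hcongr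
      _ = Efun (fun s : ZMod N => if s = 0 then (q : ℚ) / (t : ℚ) ^ 2 else 0)
            + Efun (fun _ : ZMod N => (α₂ ^ 2 * N + 2 * α₂ - k) / (t : ℚ) ^ 2) := Efun_add _ _
      _ = AddMonoidAlgebra.single (0 : ZMod N) ((q : ℚ) / (t : ℚ) ^ 2)
            + ∑ g : ZMod N, AddMonoidAlgebra.single g ((α₂ ^ 2 * N + 2 * α₂ - k) / (t : ℚ) ^ 2) := by
          rw [Efun_delta, Efun_const]
      _ = ((q : ℚ) / (t : ℚ) ^ 2) • (1 : AddMonoidAlgebra ℚ (ZMod N))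
            + ((α₂ ^ 2 * N + 2 * α₂ - k) / (t : ℚ) ^ 2)
              • ∑ g : ZMod N, AddMonoidAlgebra.single g (1:ℚ) := by
          rw [r1, r2]
end

section
/- Assume −1 ∈ C₀ and that the Gauss periods η_a, 0 ≤ a ≤ N−1, take exactly three rational values α₁, α₂, α₃. Let I_i = {a ∈ ℤ_N : η_a = α_i}, and define R₀ = {0}, R_j = ⋃_{i ∈ I_j} γ^i C₀ for j = 1, 2, 3 (a partition of F_q). If |I₁| = 1 or |I₃| = 1, then the relations 𝓡_j = {(x,y) ∈ F_q × F_q : x − y ∈ R_j} form a symmetric three-class association scheme on F_q: each 𝓡_j is symmetric, and for all j, l, m ∈ {0,1,2,3} there exists an integer p_{jl}^m such that for every pair (x,y) with x − y ∈ R_m, the number of z ∈ F_q with x − z ∈ R_j and z − y ∈ R_l equals p_{jl}^m. -/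
open scoped BigOperators

/-- Theorem 2.8 / `selfasso`.  Assume `-1 ∈ C₀` and the Gauss periods
of order `N` of `F_q` take exactly three rational values `α₁, α₂, α₃`.  With
`R₀ = {0}` and `R_j = ⋃_{i ∈ I_j} γ^i C₀`, if `|I₁| = 1` or `|I₃| = 1`, then the
relations `𝓡_j = {(x,y) : x - y ∈ R_j}` form a symmetric three-class association
scheme on `F_q`. -/
theorem stmt_5
    (p f N q : ℕ) [Fact p.Prime] (hf : 0 < f) (hq : q = p ^ f)
    (hN : 2 < N) [NeZero N] (hNq : N ∣ q - 1)
    (F : Type) [Field F] [Fintype F] [Algebra (ZMod p) F]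
    (hcard : Fintype.card F = q)
    (γ : F) (hγ : orderOf γ = q - 1)
    (ζ : ℂ) (hζ : IsPrimitiveRoot ζ p)
    (ψ : F → ℂ) (hψ : ∀ x, ψ x = ζ ^ (Algebra.trace (ZMod p) F x).val)
    (η : ℕ → ℂ)
    (hη : ∀ a, η a = ∑ j ∈ Finset.range ((q - 1) / N), ψ (γ ^ (a + N * j)))
    -- -1 ∈ C₀ = ⟨γ^N⟩
    (hneg : ∃ j : ℕ, (-1 : F) = γ ^ (N * j))
    (α₁ α₂ α₃ : ℚ)
    (h12 : α₁ ≠ α₂) (h13 : α₁ ≠ α₃) (h23 : α₂ ≠ α₃)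
    (hval : {c : ℂ | ∃ a, a < N ∧ η a = c} = {(α₁ : ℂ), (α₂ : ℂ), (α₃ : ℂ)})
    (I₁ I₂ I₃ : Finset (ZMod N))
    (hI₁ : ∀ x : ZMod N, x ∈ I₁ ↔ η x.val = (α₁ : ℂ))
    (hI₂ : ∀ x : ZMod N, x ∈ I₂ ↔ η x.val = (α₂ : ℂ))
    (hI₃ : ∀ x : ZMod N, x ∈ I₃ ↔ η x.val = (α₃ : ℂ))
    -- the four relations
    (R : Fin 4 → Set F)
    (hR0 : R 0 = {0})
    (hR1 : R 1 = {x : F | ∃ a : ZMod N, a ∈ I₁ ∧ ∃ j : ℕ, x = γ ^ (a.val + N * j)})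
    (hR2 : R 2 = {x : F | ∃ a : ZMod N, a ∈ I₂ ∧ ∃ j : ℕ, x = γ ^ (a.val + N * j)})
    (hR3 : R 3 = {x : F | ∃ a : ZMod N, a ∈ I₃ ∧ ∃ j : ℕ, x = γ ^ (a.val + N * j)})
    -- |I₁| = 1 or |I₃| = 1
    (hone : I₁.card = 1 ∨ I₃.card = 1) :
    (∀ j : Fin 4, ∀ x y : F, x - y ∈ R j → y - x ∈ R j)
    ∧ (∀ j l m : Fin 4, ∃ c : ℕ, ∀ x y : F, x - y ∈ R m →
        Nat.card {z : F // x - z ∈ R j ∧ z - y ∈ R l} = c) := by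
  classical
  obtain ⟨j₀, hj₀⟩ := hneg
  have hp : p.Prime := Fact.out
  haveI : NeZero p := ⟨hp.ne_zero⟩
  have hq2 : 2 ≤ q := by
    subst hq
    calc 2 ≤ p := hp.two_le
    _ ≤ p ^ f := Nat.le_self_pow hf.ne' p
  set K := (q - 1) / N with hKdef
  have hNK : N * K = q - 1 := Nat.mul_div_cancel' hNq
  have hN0 : 0 < N := by omega
  have hK0 : 0 < K := Nat.div_pos (Nat.le_of_dvd (by omega) hNq) hN0
  haveI : NeZero K := ⟨hK0.ne'⟩
  have hγq1 : γ ^ (q - 1) = 1 := by rw [← hγ]; exact pow_orderOf_eq_one γ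
  have hγ0 : γ ≠ 0 := by
    intro h
    rw [h, zero_pow (by omega : q - 1 ≠ 0)] at hγq1
    exact zero_ne_one hγq1
  set u : Fˣ := Units.mk0 γ hγ0 with hu
  have huγ : (u : F) = γ := rfl
  have huo : orderOf u = q - 1 := by rw [← orderOf_units, huγ, hγ]
  have hγpow : ∀ a b : ℕ, γ ^ a = γ ^ b ↔ a ≡ b [MOD q - 1] := by
    intro a b
    have h2 := pow_eq_pow_iff_modEq (x := u) (n := a) (m := b)
    rw [huo] at h2
    rw [← h2, Units.ext_iff]
    push_cast
    rw [huγ]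
  -- generator
  have hgen : ∀ x : F, ∃ k : ℕ, x ≠ 0 → (γ ^ k = x ∧ k < q - 1) := by
    intro x
    by_cases hx : x = 0
    · exact ⟨0, fun h => absurd hx h⟩
    · have htop : Subgroup.zpowers u = ⊤ := by
        apply Subgroup.eq_top_of_card_eq
        rw [Nat.card_zpowers, huo, Nat.card_eq_fintype_card, Fintype.card_units, hcard]
      have hxu : Units.mk0 x hx ∈ Subgroup.zpowers u := htop ▸ Subgroup.mem_top _
      rw [← mem_powers_iff_mem_zpowers] at hxu
      obtain ⟨k, hk⟩ := hxu
      refine ⟨k % (q - 1), fun _ => ⟨?_, Nat.mod_lt _ (by omega)⟩⟩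
      have h1 : γ ^ (k % (q - 1)) = γ ^ k := by
        rw [hγpow]; exact (Nat.mod_modEq k (q - 1))
      rw [h1]
      have := congrArg Units.val hk
      simpa [hu] using this
  choose ind hind using hgen
  set cls : F → ZMod N := fun x => ((ind x : ZMod N)) with hclsdef
  have hmodN : ∀ a b : ℕ, γ ^ a = γ ^ b → ((a : ZMod N) = (b : ZMod N)) := by
    intro a b h
    rw [ZMod.natCast_eq_natCast_iff]
    exact ((hγpow a b).mp h).of_dvd hNq
  have hclsPow : ∀ a : ℕ, cls (γ ^ a) = (a : ZMod N) := by
    intro a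
    exact hmodN _ _ ((hind _ (pow_ne_zero _ hγ0)).1)
  -- more cls facts
  have hclsMul : ∀ x y : F, x ≠ 0 → y ≠ 0 → cls (x * y) = cls x + cls y := by
    intro x y hx hy
    have h := hclsPow (ind x + ind y)
    rw [pow_add, (hind x hx).1, (hind y hy).1] at h
    rw [h]; push_cast; rfl
  have hclsm1 : cls (-1 : F) = 0 := by
    have h := hclsPow (N * j₀)
    rw [← hj₀] at h
    rw [h]; push_cast; simp
  have hclsNeg : ∀ x : F, x ≠ 0 → cls (-x) = cls x := by
    intro x hx
    rw [← neg_one_mul, hclsMul _ _ (by norm_num) hx, hclsm1, zero_add]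
  -- ψ facts
  have hζp : ζ ^ p = 1 := hζ.pow_eq_one
  have hζmod : ∀ a b : ℕ, a % p = b % p → ζ ^ a = ζ ^ b := by
    intro a b h
    rw [← Nat.div_add_mod a p, ← Nat.div_add_mod b p, pow_add, pow_add, pow_mul, pow_mul,
      hζp, one_pow, one_pow, h]
  have hψadd : ∀ x y : F, ψ (x + y) = ψ x * ψ y := by
    intro x y
    rw [hψ, hψ, hψ, ← pow_add, map_add]
    apply hζmod
    rw [ZMod.val_add]
    exact Nat.mod_mod_of_dvd _ dvd_rfl
  have hψ0 : ψ 0 = 1 := by rw [hψ]; simp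
  have hψnt : ∃ x : F, ψ x ≠ 1 := by
    haveI : Module.Finite (ZMod p) F := Module.Finite.of_finite
    haveI : Algebra.IsSeparable (ZMod p) F := by infer_instance
    obtain ⟨x, hx⟩ := Algebra.trace_surjective (ZMod p) F 1
    refine ⟨x, ?_⟩
    rw [hψ, hx, ZMod.val_one, pow_one]
    exact hζ.ne_one hp.one_lt
  have hsum0 : ∑ x : F, ψ x = 0 := by
    obtain ⟨y, hy⟩ := hψnt
    have h1 : ∑ x : F, ψ x = ∑ x : F, ψ (y + x) :=
      (Fintype.sum_equiv (Equiv.addLeft y) (fun x => ψ (y + x)) ψ (fun x => rfl)).symm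
    have h2 : ∑ x : F, ψ (y + x) = ψ y * ∑ x : F, ψ x := by
      rw [Finset.mul_sum]
      exact Finset.sum_congr rfl fun x _ => hψadd y x
    have h3 : (ψ y - 1) * ∑ x : F, ψ x = 0 := by
      rw [sub_mul, one_mul, ← h2, ← h1, sub_self]
    rcases mul_eq_zero.mp h3 with h | h
    · exact absurd (by linear_combination h) hy
    · exact h
  have hsummul : ∀ c : F, c ≠ 0 → ∑ x : F, ψ (x * c) = 0 := by
    intro c hc
    rw [← hsum0]
    exact Fintype.sum_equiv (Equiv.mulRight₀ c hc) (fun x => ψ (x * c)) ψ (fun x => rfl)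
  have horth : ∀ w : F, ∑ c : F, ψ (c * w) = if w = 0 then (q : ℂ) else 0 := by
    intro w
    by_cases hw : w = 0
    · subst hw
      rw [if_pos rfl]
      simp only [mul_zero, hψ0]
      rw [Finset.sum_const, Finset.card_univ, hcard]
      simp
    · rw [if_neg hw, ← hsummul w hw]
  -- η facts
  have hηper : ∀ k : ℕ, η (k + N) = η k := by
    intro k
    rw [hη, hη]
    have hsucc : ∀ j : ℕ, γ ^ (k + N + N * j) = γ ^ (k + N * (j + 1)) := by
      intro j; ring_nf
    calc ∑ j ∈ Finset.range K, ψ (γ ^ (k + N + N * j))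
        = ∑ j ∈ Finset.range K, ψ (γ ^ (k + N * (j + 1))) := by
          exact Finset.sum_congr rfl fun j _ => by rw [hsucc]
      _ = ∑ j ∈ Finset.range K, ψ (γ ^ (k + N * j)) := by
          set g : ℕ → ℂ := fun j => ψ (γ ^ (k + N * j)) with hg
          have hgK : g K = g 0 := by
            simp only [hg]
            congr 1
            rw [pow_add, hNK, hγq1, mul_one, mul_zero, add_zero]
          have h1 := Finset.sum_range_succ' g K
          rw [Finset.sum_range_succ g K, hgK] at h1
          exact add_right_cancel h1.symm
  have hηshift : ∀ (m k : ℕ), η (k + N * m) = η k := by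
    intro m
    induction m with
    | zero => intro k; simp
    | succ n ih =>
      intro k
      have : k + N * (n + 1) = (k + N * n) + N := by ring
      rw [this, hηper, ih]
  have hηmod : ∀ k : ℕ, η k = η (k % N) := by
    intro k
    conv_lhs => rw [← Nat.mod_add_div k N]
    exact hηshift _ _
  set η' : ZMod N → ℂ := fun a => η a.val with hη'def
  have hηcast : ∀ k : ℕ, η k = η' ((k : ZMod N)) := by
    intro k
    simp only [hη'def, ZMod.val_natCast]
    exact hηmod k
  have hvalcast : ∀ a : ZMod N, ((a.val : ℕ) : ZMod N) = a := fun a => ZMod.natCast_rightInverse a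
  -- coset sums
  have hcoset : ∀ (s : ℕ) (c : F), c ≠ 0 →
      ∑ j ∈ Finset.range K, ψ (γ ^ (s + N * j) * c) = η' ((s : ZMod N) + cls c) := by
    intro s c hc
    have h1 : ∀ j : ℕ, γ ^ (s + N * j) * c = γ ^ ((s + ind c) + N * j) := by
      intro j
      conv_lhs => rw [← (hind c hc).1]
      rw [← pow_add]
      congr 1
      ring
    calc ∑ j ∈ Finset.range K, ψ (γ ^ (s + N * j) * c)
        = ∑ j ∈ Finset.range K, ψ (γ ^ ((s + ind c) + N * j)) :=
          Finset.sum_congr rfl fun j _ => by rw [h1]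
      _ = η (s + ind c) := (hη _).symm
      _ = η' ((s : ZMod N) + cls c) := by rw [hηcast]; push_cast; rfl
  -- double sum over residues = sum over range (q-1)
  have hrange : ∀ g : ℕ → ℂ, (∑ a : ZMod N, ∑ j ∈ Finset.range K, g (a.val + N * j))
      = ∑ m ∈ Finset.range (q - 1), g m := by
    intro g
    rw [← hNK, ← Finset.sum_product']
    apply Finset.sum_nbij' (i := fun x : ZMod N × ℕ => x.1.val + N * x.2)
      (j := fun m : ℕ => ((m : ZMod N), m / N))
    · intro a _
      simp only [Finset.mem_range]
      have h1 := ZMod.val_lt a.1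
      have h2 : a.2 < K := Finset.mem_range.mp (Finset.mem_product.mp (by assumption)).2
      have h3 : N * (a.2 + 1) ≤ N * K := Nat.mul_le_mul_left _ (by omega)
      have h4 : N * (a.2 + 1) = N * a.2 + N := by ring
      omega
    · intro m hm
      simp only [Finset.mem_product, Finset.mem_univ, true_and, Finset.mem_range]
      rw [Nat.div_lt_iff_lt_mul hN0, mul_comm]
      exact Finset.mem_range.mp hm
    · intro a ha
      have h2 : a.2 < K := Finset.mem_range.mp (Finset.mem_product.mp ha).2
      have hval : a.1.val < N := ZMod.val_lt a.1
      ext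
      · push_cast
        simp [hvalcast, ZMod.natCast_self]
      · simp only
        rw [Nat.add_mul_div_left _ _ hN0, Nat.div_eq_of_lt hval, zero_add]
    · intro m _
      simp only [ZMod.val_natCast]
      exact Nat.mod_add_div m N
    · intro a _
      rfl
  have hfullrange : ∀ c : F, c ≠ 0 → ∑ m ∈ Finset.range (q - 1), ψ (γ ^ m * c) = -1 := by
    intro c hc
    have hinj : ∀ a ∈ Finset.range (q - 1), ∀ b ∈ Finset.range (q - 1),
        γ ^ a = γ ^ b → a = b := by
      intro a ha b hb h
      have := (hγpow a b).mp h
      rwa [Nat.ModEq, Nat.mod_eq_of_lt (Finset.mem_range.mp ha),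
        Nat.mod_eq_of_lt (Finset.mem_range.mp hb)] at this
    have himg : (Finset.range (q - 1)).image (fun m => γ ^ m) = Finset.univ.erase (0 : F) := by
      apply Finset.eq_of_subset_of_card_le
      · intro x hx
        obtain ⟨m, _, rfl⟩ := Finset.mem_image.mp hx
        exact Finset.mem_erase.mpr ⟨pow_ne_zero _ hγ0, Finset.mem_univ _⟩
      · rw [Finset.card_erase_of_mem (Finset.mem_univ _), Finset.card_univ, hcard,
          Finset.card_image_of_injOn hinj, Finset.card_range]
    calc ∑ m ∈ Finset.range (q - 1), ψ (γ ^ m * c)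
        = ∑ x ∈ (Finset.range (q - 1)).image (fun m => γ ^ m), ψ (x * c) :=
          (Finset.sum_image (f := fun x => ψ (x * c)) (g := fun m => γ ^ m)
            (fun a ha b hb h => hinj a ha b hb h)).symm
      _ = ∑ x ∈ Finset.univ.erase (0 : F), ψ (x * c) := by rw [himg]
      _ = (∑ x : F, ψ (x * c)) - ψ (0 * c) := Finset.sum_erase_eq_sub (Finset.mem_univ _)
      _ = -1 := by rw [hsummul c hc, zero_mul, hψ0]; ring
  -- ZMod K indexed version
  have hZK : ∀ g : ℕ → ℂ, (∑ j : ZMod K, g j.val) = ∑ j ∈ Finset.range K, g j := by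
    intro g
    apply Finset.sum_nbij' (i := fun j : ZMod K => j.val) (j := fun m : ℕ => (m : ZMod K))
    · intro a _; exact Finset.mem_range.mpr (ZMod.val_lt a)
    · intro m _; exact Finset.mem_univ _
    · intro a _; exact ZMod.natCast_rightInverse a
    · intro m hm; exact (ZMod.val_natCast K m).trans (Nat.mod_eq_of_lt (Finset.mem_range.mp hm))
    · intro a _; rfl
  have hfullZ : ∀ w : F, (∑ a : ZMod N, ∑ j : ZMod K, ψ (γ ^ (a.val + N * j.val) * w))
      = if w = 0 then ((q : ℂ) - 1) else -1 := by
    intro w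
    by_cases hw : w = 0
    · subst hw
      rw [if_pos rfl]
      have : ∀ a : ZMod N, ∀ j : ZMod K, ψ (γ ^ (a.val + N * j.val) * 0) = 1 := by
        intro a j; rw [mul_zero, hψ0]
      simp only [this, Finset.sum_const, Finset.card_univ, nsmul_eq_mul, mul_one, ZMod.card]
      have h := congrArg (Nat.cast (R := ℂ)) hNK
      push_cast [Nat.cast_sub (by omega : 1 ≤ q)] at h
      exact h
    · rw [if_neg hw]
      have h1 : ∀ a : ZMod N, (∑ j : ZMod K, ψ (γ ^ (a.val + N * j.val) * w))
          = ∑ j ∈ Finset.range K, ψ (γ ^ (a.val + N * j) * w) :=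
        fun a => hZK (fun m => ψ (γ ^ (a.val + N * m) * w))
      calc (∑ a : ZMod N, ∑ j : ZMod K, ψ (γ ^ (a.val + N * j.val) * w))
          = ∑ a : ZMod N, ∑ j ∈ Finset.range K, ψ (γ ^ (a.val + N * j) * w) :=
            Finset.sum_congr rfl fun a _ => h1 a
        _ = ∑ m ∈ Finset.range (q - 1), ψ (γ ^ m * w) :=
            hrange (fun m => ψ (γ ^ m * w))
        _ = -1 := hfullrange w hw
  have hvalcastK : ∀ a : ZMod K, ((a.val : ℕ) : ZMod K) = a := fun a => ZMod.natCast_rightInverse a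
  have hZKψ : ∀ c : ℕ, η c = ∑ j : ZMod K, ψ (γ ^ (c + N * j.val)) := by
    intro c
    rw [hη c]
    exact (hZK (fun m => ψ (γ ^ (c + N * m)))).symm
  -- E1
  have hE1 : (∑ a : ZMod N, η' a) = -1 := by
    have h0 : ∀ a : ZMod N, η' a = ∑ j ∈ Finset.range K, ψ (γ ^ (a.val + N * j) * 1) := by
      intro a; simp only [mul_one, hη'def]; exact hη a.val
    calc (∑ a : ZMod N, η' a)
        = ∑ a : ZMod N, ∑ j ∈ Finset.range K, ψ (γ ^ (a.val + N * j) * 1) :=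
          Finset.sum_congr rfl fun a _ => h0 a
      _ = ∑ m ∈ Finset.range (q - 1), ψ (γ ^ m * 1) := hrange (fun m => ψ (γ ^ m * 1))
      _ = -1 := hfullrange 1 one_ne_zero
  have hE1' : ∀ b : ZMod N, (∑ a : ZMod N, η' (a + b)) = -1 := by
    intro b
    rw [← hE1]
    exact Fintype.sum_equiv (Equiv.addRight b) (fun a => η' (a + b)) η' (fun a => rfl)
  -- E2
  have hE2 : ∀ b : ZMod N, (∑ a : ZMod N, η' a * η' (a + b))
      = (if b = 0 then (q : ℂ) else 0) - K := by
    intro b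
    have key : ∀ w : ZMod K, ∀ a : ZMod N, ∀ j : ZMod K,
        ψ (γ ^ (a.val + N * j.val)) * ψ (γ ^ ((a.val + b.val) + N * ((j + w).val)))
        = ψ (γ ^ (a.val + N * j.val) * (1 + γ ^ (b.val + N * w.val))) := by
      intro w a j
      rw [← hψadd]
      congr 1
      have hpow : γ ^ ((a.val + b.val) + N * ((j + w).val))
          = γ ^ (a.val + N * j.val) * γ ^ (b.val + N * w.val) := by
        rw [← pow_add]
        apply (hγpow _ _).mpr
        have h1 : (j + w).val ≡ j.val + w.val [MOD K] := by
          rw [ZMod.val_add]; exact Nat.mod_modEq _ K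
        have h2 := Nat.ModEq.mul_left' (c := N) h1
        rw [hNK] at h2
        calc a.val + b.val + N * ((j + w).val)
            ≡ a.val + b.val + N * (j.val + w.val) [MOD q - 1] := Nat.ModEq.add_left _ h2
          _ = a.val + N * j.val + (b.val + N * w.val) := by ring
      rw [hpow]
      ring
    have hexp : ∀ a : ZMod N, η' a * η' (a + b)
        = ∑ j : ZMod K, ∑ w : ZMod K,
            ψ (γ ^ (a.val + N * j.val) * (1 + γ ^ (b.val + N * w.val))) := by
      intro a
      have e1 : η' a = ∑ j : ZMod K, ψ (γ ^ (a.val + N * j.val)) := hZKψ a.val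
      have e2 : η' (a + b) = ∑ j : ZMod K, ψ (γ ^ ((a.val + b.val) + N * j.val)) := by
        have hc : ((a.val + b.val : ℕ) : ZMod N) = a + b := by push_cast [hvalcast]; rfl
        have : η' (a + b) = η (a.val + b.val) := by rw [hηcast (a.val + b.val), hc]
        rw [this]; exact hZKψ _
      rw [e1, e2, Finset.sum_mul_sum]
      apply Finset.sum_congr rfl
      intro j _
      rw [← Equiv.sum_comp (Equiv.addLeft j)
        (fun j' : ZMod K => ψ (γ ^ (a.val + N * j.val)) * ψ (γ ^ ((a.val + b.val) + N * j'.val)))]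
      exact Finset.sum_congr rfl fun w _ => key w a j
    have hswap : (∑ a : ZMod N, η' a * η' (a + b))
        = ∑ w : ZMod K, ∑ a : ZMod N, ∑ j : ZMod K,
            ψ (γ ^ (a.val + N * j.val) * (1 + γ ^ (b.val + N * w.val))) := by
      rw [Finset.sum_congr rfl fun a _ => hexp a]
      rw [Finset.sum_congr rfl fun (a : ZMod N) _ => Finset.sum_comm]
      exact Finset.sum_comm
    rw [hswap]
    have hinner : ∀ w : ZMod K, (∑ a : ZMod N, ∑ j : ZMod K,
        ψ (γ ^ (a.val + N * j.val) * (1 + γ ^ (b.val + N * w.val))))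
        = if (1 + γ ^ (b.val + N * w.val)) = 0 then ((q : ℂ) - 1) else -1 :=
      fun w => hfullZ (1 + γ ^ (b.val + N * w.val))
    rw [Finset.sum_congr rfl fun w _ => hinner w]
    by_cases hb : b = 0
    · subst hb
      have hcond : ∀ w : ZMod K, ((1 + γ ^ ((0 : ZMod N).val + N * w.val)) = 0) ↔ (w = (j₀ : ZMod K)) := by
        intro w
        rw [ZMod.val_zero, zero_add]
        constructor
        · intro h
          have hg : γ ^ (N * w.val) = γ ^ (N * j₀) := by
            rw [← hj₀]; linear_combination h
          have hm := (hγpow _ _).mp hg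
          rw [← hNK] at hm
          have hm2 := Nat.ModEq.mul_left_cancel' (by omega : N ≠ 0) hm
          have : ((w.val : ℕ) : ZMod K) = ((j₀ : ℕ) : ZMod K) :=
            (ZMod.natCast_eq_natCast_iff _ _ _).mpr hm2
          rwa [hvalcastK] at this
        · intro h
          subst h
          have h1 : ((j₀ : ZMod K)).val ≡ j₀ [MOD K] := by
            rw [ZMod.val_natCast]; exact Nat.mod_modEq _ K
          have h2 := Nat.ModEq.mul_left' (c := N) h1
          rw [hNK] at h2
          have : γ ^ (N * ((j₀ : ZMod K)).val) = γ ^ (N * j₀) := (hγpow _ _).mpr h2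
          rw [this, ← hj₀]
          ring
      rw [Finset.sum_congr rfl fun w _ => if_congr (hcond w) rfl rfl]
      have hsplit : ∀ w : ZMod K, (if w = (j₀ : ZMod K) then ((q : ℂ) - 1) else -1)
          = -1 + (if w = (j₀ : ZMod K) then ((q : ℂ) - 1) - (-1) else 0) := by
        intro w; split_ifs <;> ring
      rw [Finset.sum_congr rfl fun w _ => hsplit w, Finset.sum_add_distrib,
        Finset.sum_ite_eq' Finset.univ ((j₀ : ZMod K)) (fun _ => ((q : ℂ) - 1) - (-1)),
        if_pos (Finset.mem_univ _), Finset.sum_const, Finset.card_univ, ZMod.card]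
      rw [if_pos rfl]
      ring
    · have hcond : ∀ w : ZMod K, ¬ ((1 + γ ^ (b.val + N * w.val)) = 0) := by
        intro w h
        have hg : γ ^ (b.val + N * w.val) = γ ^ (N * j₀) := by
          rw [← hj₀]; linear_combination h
        have h2 := hmodN _ _ hg
        push_cast [hvalcast, ZMod.natCast_self] at h2
        simp only [zero_mul, mul_zero, add_zero, zero_add] at h2
        exact hb h2
      rw [Finset.sum_congr rfl fun w _ => if_neg (hcond w), Finset.sum_const,
        Finset.card_univ, ZMod.card, if_neg hb]
      ring
  -- partition of ZMod N into the three classes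
  have hvals : ∀ a : ZMod N, a ∈ I₁ ∨ a ∈ I₂ ∨ a ∈ I₃ := by
    intro a
    have hmem : η a.val ∈ {c : ℂ | ∃ a', a' < N ∧ η a' = c} := ⟨a.val, ZMod.val_lt a, rfl⟩
    rw [hval] at hmem
    simp only [Set.mem_insert_iff, Set.mem_singleton_iff] at hmem
    rcases hmem with h | h | h
    · exact Or.inl ((hI₁ a).mpr h)
    · exact Or.inr (Or.inl ((hI₂ a).mpr h))
    · exact Or.inr (Or.inr ((hI₃ a).mpr h))
  have hd12 : ∀ a : ZMod N, a ∈ I₁ → a ∈ I₂ → False := by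
    intro a h1 h2
    have : (α₁ : ℂ) = (α₂ : ℂ) := (((hI₁ a).mp h1).symm).trans ((hI₂ a).mp h2)
    exact h12 (by exact_mod_cast this)
  have hd13 : ∀ a : ZMod N, a ∈ I₁ → a ∈ I₃ → False := by
    intro a h1 h2
    have : (α₁ : ℂ) = (α₃ : ℂ) := (((hI₁ a).mp h1).symm).trans ((hI₃ a).mp h2)
    exact h13 (by exact_mod_cast this)
  have hd23 : ∀ a : ZMod N, a ∈ I₂ → a ∈ I₃ → False := by
    intro a h1 h2
    have : (α₂ : ℂ) = (α₃ : ℂ) := (((hI₂ a).mp h1).symm).trans ((hI₃ a).mp h2)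
    exact h23 (by exact_mod_cast this)
  have hv1 : ∀ a ∈ I₁, η' a = (α₁ : ℂ) := fun a ha => (hI₁ a).mp ha
  have hv2 : ∀ a ∈ I₂, η' a = (α₂ : ℂ) := fun a ha => (hI₂ a).mp ha
  have hv3 : ∀ a ∈ I₃, η' a = (α₃ : ℂ) := fun a ha => (hI₃ a).mp ha
  -- T sums
  set T : Finset (ZMod N) → ZMod N → ℂ := fun J b => ∑ i ∈ J, η' (i + b) with hTdef
  have huniv : (I₁ ∪ I₂ ∪ I₃) = Finset.univ := by
    apply Finset.eq_univ_of_forall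
    intro a
    rcases hvals a with h | h | h <;> simp [h, Finset.mem_union]
  have hdis12 : Disjoint I₁ I₂ := Finset.disjoint_left.mpr (fun {a} h1 h2 => hd12 a h1 h2)
  have hdis3 : Disjoint (I₁ ∪ I₂) I₃ := by
    rw [Finset.disjoint_union_left]
    exact ⟨Finset.disjoint_left.mpr (fun {a} h1 h2 => hd13 a h1 h2),
      Finset.disjoint_left.mpr (fun {a} h1 h2 => hd23 a h1 h2)⟩
  have hTsum : ∀ b : ZMod N, T I₁ b + T I₂ b + T I₃ b = -1 := by
    intro b
    have : T I₁ b + T I₂ b + T I₃ b = ∑ a : ZMod N, η' (a + b) := by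
      rw [hTdef]
      rw [← Finset.sum_union hdis12, ← Finset.sum_union hdis3, huniv]
    rw [this]
    exact hE1' b
  have hTval : ∀ b : ZMod N, (α₁ : ℂ) * T I₁ b + (α₂ : ℂ) * T I₂ b + (α₃ : ℂ) * T I₃ b
      = (if b = 0 then (q : ℂ) else 0) - K := by
    intro b
    have h1 : ∀ (J : Finset (ZMod N)) (v : ℂ), (∀ a ∈ J, η' a = v) →
        v * T J b = ∑ i ∈ J, η' i * η' (i + b) := by
      intro J v hv
      rw [hTdef, Finset.mul_sum]
      exact Finset.sum_congr rfl fun i hi => by rw [hv i hi]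
    rw [h1 I₁ _ hv1, h1 I₂ _ hv2, h1 I₃ _ hv3, ← Finset.sum_union hdis12,
      ← Finset.sum_union hdis3, huniv]
    exact hE2 b
  -- the singleton class
  obtain ⟨t, S, hSlab, hSt⟩ : ∃ (t : ZMod N) (S : Finset (ZMod N)),
      (S = I₁ ∨ S = I₃) ∧ S = {t} := by
    rcases hone with h | h
    · obtain ⟨t, ht⟩ := Finset.card_eq_one.mp h; exact ⟨t, I₁, Or.inl rfl, ht⟩
    · obtain ⟨t, ht⟩ := Finset.card_eq_one.mp h; exact ⟨t, I₃, Or.inr rfl, ht⟩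
  have htS : t ∈ S := by rw [hSt]; exact Finset.mem_singleton_self t
  have hTt : ∀ b : ZMod N, T S b = η' (t + b) := by
    intro b; rw [hSt, hTdef]; exact Finset.sum_singleton _ _
  have hKEY : ∀ (J : Finset (ZMod N)), (J = I₁ ∨ J = I₂ ∨ J = I₃) →
      ∀ b b' : ZMod N, η' (t + b) = η' (t + b') → (b = 0 ↔ b' = 0) → T J b = T J b' := by
    intro J hJ b b' hbv hb0
    have hif : (if b = 0 then (q : ℂ) else 0) = (if b' = 0 then (q : ℂ) else 0) := by
      by_cases h : b = 0
      · rw [if_pos h, if_pos (hb0.mp h)]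
      · rw [if_neg h, if_neg (fun h' => h (hb0.mpr h'))]
    have e1 := hTsum b
    have e1' := hTsum b'
    have e2 := hTval b
    have e2' := hTval b'
    rw [hif] at e2
    have eS : T S b = T S b' := by rw [hTt, hTt, hbv]
    rcases hSlab with hS | hS
    · subst hS
      have eI2 : T I₂ b = T I₂ b' := by
        have hne : (α₂ : ℂ) - α₃ ≠ 0 := sub_ne_zero.mpr (by exact_mod_cast h23)
        have lin : ((α₂ : ℂ) - α₃) * (T I₂ b - T I₂ b') = 0 := by
          linear_combination e2 - e2' - (α₃ : ℂ) * e1 + (α₃ : ℂ) * e1' - ((α₁ : ℂ) - α₃) * eS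
        rcases mul_eq_zero.mp lin with h | h
        · exact absurd h hne
        · linear_combination h
      have eI3 : T I₃ b = T I₃ b' := by linear_combination e1 - e1' - eS - eI2
      rcases hJ with rfl | rfl | rfl
      · exact eS
      · exact eI2
      · exact eI3
    · subst hS
      have eI2 : T I₂ b = T I₂ b' := by
        have hne : (α₂ : ℂ) - α₁ ≠ 0 := sub_ne_zero.mpr (by exact_mod_cast h12.symm)
        have lin : ((α₂ : ℂ) - α₁) * (T I₂ b - T I₂ b') = 0 := by
          linear_combination e2 - e2' - (α₁ : ℂ) * e1 + (α₁ : ℂ) * e1' - ((α₃ : ℂ) - α₁) * eS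
        rcases mul_eq_zero.mp lin with h | h
        · exact absurd h hne
        · linear_combination h
      have eI1 : T I₁ b = T I₁ b' := by linear_combination e1 - e1' - eS - eI2
      rcases hJ with rfl | rfl | rfl
      · exact eI1
      · exact eI2
      · exact eS
  -- finite cosets
  set Cfin : ZMod N → Finset F := fun i => (Finset.range K).image (fun j => γ ^ (i.val + N * j))
    with hCdef
  have hCsub : ∀ (i : ZMod N) (x : F), (∃ j : ℕ, x = γ ^ (i.val + N * j)) ↔ x ∈ Cfin i := by
    intro i x
    constructor
    · rintro ⟨j, rfl⟩
      rw [hCdef]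
      apply Finset.mem_image.mpr
      refine ⟨j % K, Finset.mem_range.mpr (Nat.mod_lt _ hK0), ?_⟩
      apply (hγpow _ _).mpr
      rw [← hNK]
      exact Nat.ModEq.add_left _ (Nat.ModEq.mul_left' N (Nat.mod_modEq j K))
    · intro hx
      obtain ⟨j, _, rfl⟩ := Finset.mem_image.mp hx
      exact ⟨j, rfl⟩
  have hclsgen : ∀ (i : ZMod N) (j : ℕ), cls (γ ^ (i.val + N * j)) = i := by
    intro i j
    rw [hclsPow]
    push_cast [hvalcast, ZMod.natCast_self]
    ring
  have hCcls : ∀ (i : ZMod N) (x : F), x ∈ Cfin i → x ≠ 0 ∧ cls x = i := by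
    intro i x hx
    obtain ⟨j, _, rfl⟩ := Finset.mem_image.mp hx
    exact ⟨pow_ne_zero _ hγ0, hclsgen i j⟩
  have hCof : ∀ x : F, x ≠ 0 → x ∈ Cfin (cls x) := by
    intro x hx
    apply (hCsub _ x).mp
    refine ⟨ind x / N, ?_⟩
    have hval' : (cls x).val = ind x % N := ZMod.val_natCast _ _
    rw [hval', Nat.mod_add_div]
    exact ((hind x hx).1).symm
  have hCdisj : ∀ i i' : ZMod N, i ≠ i' → Disjoint (Cfin i) (Cfin i') := by
    intro i i' hne
    rw [Finset.disjoint_left]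
    intro x hx hx'
    exact hne (((hCcls i x hx).2.symm).trans (hCcls i' x hx').2)
  set RF : Finset (ZMod N) → Finset F := fun J => J.biUnion Cfin with hRFdef
  have hRFmem : ∀ (J : Finset (ZMod N)) (x : F), x ∈ RF J ↔ (x ≠ 0 ∧ cls x ∈ J) := by
    intro J x
    rw [hRFdef]
    simp only
    rw [Finset.mem_biUnion]
    constructor
    · rintro ⟨i, hi, hx⟩
      obtain ⟨hx0, hcl⟩ := hCcls i x hx
      exact ⟨hx0, hcl ▸ hi⟩
    · rintro ⟨hx0, hcl⟩
      exact ⟨cls x, hcl, hCof x hx0⟩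
  have hRFsum : ∀ (J : Finset (ZMod N)) (c : F), c ≠ 0 →
      (∑ x ∈ RF J, ψ (x * c)) = T J (cls c) := by
    intro J c hc
    rw [hRFdef, hTdef]
    simp only
    rw [Finset.sum_biUnion (fun i _ i' _ hne => hCdisj i i' hne)]
    apply Finset.sum_congr rfl
    intro i _
    rw [hCdef]
    rw [Finset.sum_image (fun a ha b hb hE => ?inj)]
    · rw [hcoset i.val c hc, hvalcast]
    case inj =>
      have hm := (hγpow _ _).mp hE
      rw [← hNK] at hm
      have hm2 := Nat.ModEq.mul_left_cancel' (by omega : N ≠ 0)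
        (Nat.ModEq.add_left_cancel' i.val hm)
      rwa [Nat.ModEq, Nat.mod_eq_of_lt (Finset.mem_range.mp ha),
        Nat.mod_eq_of_lt (Finset.mem_range.mp hb)] at hm2
  -- correspondence with the R sets
  have hRgen : ∀ (J : Finset (ZMod N)) (x : F),
      (∃ a : ZMod N, a ∈ J ∧ ∃ j : ℕ, x = γ ^ (a.val + N * j)) ↔ x ∈ RF J := by
    intro J x
    constructor
    · rintro ⟨a, ha, j, rfl⟩
      rw [hRFmem]
      exact ⟨pow_ne_zero _ hγ0, by rw [hclsgen a j]; exact ha⟩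
    · intro hx
      obtain ⟨hx0, hcl⟩ := (hRFmem J x).mp hx
      refine ⟨cls x, hcl, ind x / N, ?_⟩
      have hval' : (cls x).val = ind x % N := ZMod.val_natCast _ _
      rw [hval', Nat.mod_add_div]
      exact ((hind x hx0).1).symm
  have hR1' : ∀ x : F, x ∈ R 1 ↔ x ∈ RF I₁ := by
    intro x; rw [hR1]; exact hRgen I₁ x
  have hR2' : ∀ x : F, x ∈ R 2 ↔ x ∈ RF I₂ := by
    intro x; rw [hR2]; exact hRgen I₂ x
  have hR3' : ∀ x : F, x ∈ R 3 ↔ x ∈ RF I₃ := by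
    intro x; rw [hR3]; exact hRgen I₃ x
  have hRneg : ∀ (J : Finset (ZMod N)) (x : F), x ∈ RF J → -x ∈ RF J := by
    intro J x hx
    rw [hRFmem] at hx ⊢
    exact ⟨neg_ne_zero.mpr hx.1, by rw [hclsNeg x hx.1]; exact hx.2⟩
  constructor
  · -- symmetry
    intro j x y hxy
    have hyx : y - x = -(x - y) := by ring
    have h4 : j = 0 ∨ j = 1 ∨ j = 2 ∨ j = 3 := by omega
    rcases h4 with rfl | rfl | rfl | rfl
    · rw [hR0] at hxy ⊢
      rw [Set.mem_singleton_iff] at hxy ⊢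
      rw [hyx, hxy, neg_zero]
    · rw [hR1'] at hxy ⊢
      rw [hyx]; exact hRneg _ _ hxy
    · rw [hR2'] at hxy ⊢
      rw [hyx]; exact hRneg _ _ hxy
    · rw [hR3'] at hxy ⊢
      rw [hyx]; exact hRneg _ _ hxy
  -- counting function
  set cnt : Finset F → Finset F → F → ℕ := fun A B d =>
    ((A ×ˢ B).filter (fun uv => uv.1 + uv.2 = d)).card with hcntdef
  have hcard' : ∀ (A B : Finset F) (x y : F),
      Nat.card {z : F // x - z ∈ A ∧ z - y ∈ B} = cnt A B (x - y) := by
    intro A B x y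
    rw [Nat.card_eq_fintype_card, Fintype.card_subtype, hcntdef]
    apply Finset.card_bij' (i := fun z _ => (x - z, z - y)) (j := fun uv _ => y + uv.2)
    · intro z hz
      rw [Finset.mem_filter] at hz ⊢
      obtain ⟨-, h1, h2⟩ := hz
      refine ⟨Finset.mem_product.mpr ⟨h1, h2⟩, by ring⟩
    · intro uv huv
      rw [Finset.mem_filter] at huv ⊢
      obtain ⟨hP, hsum⟩ := huv
      obtain ⟨h1, h2⟩ := Finset.mem_product.mp hP
      refine ⟨Finset.mem_univ _, ?_, ?_⟩
      · have he : x - (y + uv.2) = uv.1 := by linear_combination -hsum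
        rw [he]; exact h1
      · have he : y + uv.2 - y = uv.2 := by ring
        rw [he]; exact h2
    · intro z _; ring
    · intro uv huv
      rw [Finset.mem_filter] at huv
      have hsum := huv.2
      have he1 : x - (y + uv.2) = uv.1 := by linear_combination -hsum
      have he2 : y + uv.2 - y = uv.2 := by ring
      rw [Prod.ext_iff]
      exact ⟨he1, he2⟩
  have hqC : (q : ℂ) ≠ 0 := Nat.cast_ne_zero.mpr (by omega)
  have hcntchar : ∀ (A B : Finset F) (d : F),
      (q : ℂ) * cnt A B d
      = ∑ c : F, (∑ u ∈ A, ψ (u * c)) * (∑ v ∈ B, ψ (v * c)) * ψ (c * (-d)) := by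
    intro A B d
    have hterm : ∀ c : F, (∑ u ∈ A, ψ (u * c)) * (∑ v ∈ B, ψ (v * c)) * ψ (c * (-d))
        = ∑ uv ∈ A ×ˢ B, ψ (c * (uv.1 + uv.2 - d)) := by
      intro c
      rw [Finset.sum_mul_sum, Finset.sum_mul, Finset.sum_product]
      apply Finset.sum_congr rfl
      intro u _
      rw [Finset.sum_mul]
      apply Finset.sum_congr rfl
      intro v _
      rw [← hψadd, ← hψadd]
      congr 1
      ring
    symm
    calc ∑ c : F, (∑ u ∈ A, ψ (u * c)) * (∑ v ∈ B, ψ (v * c)) * ψ (c * (-d))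
        = ∑ c : F, ∑ uv ∈ A ×ˢ B, ψ (c * (uv.1 + uv.2 - d)) :=
          Finset.sum_congr rfl fun c _ => hterm c
      _ = ∑ uv ∈ A ×ˢ B, ∑ c : F, ψ (c * (uv.1 + uv.2 - d)) := Finset.sum_comm
      _ = ∑ uv ∈ A ×ˢ B, (if uv.1 + uv.2 = d then (q : ℂ) else 0) := by
          apply Finset.sum_congr rfl
          intro uv _
          rw [horth (uv.1 + uv.2 - d)]
          congr 1
          simp [sub_eq_zero]
      _ = ∑ uv ∈ (A ×ˢ B).filter (fun uv => uv.1 + uv.2 = d), (q : ℂ) :=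
          (Finset.sum_filter _ _).symm
      _ = (q : ℂ) * cnt A B d := by
          rw [Finset.sum_const, hcntdef, nsmul_eq_mul, mul_comm]
  -- the dual partition classes
  set Q : Finset (ZMod N) → Finset (ZMod N) := fun J => J.image (fun i => i - t) with hQdef
  have hQmem : ∀ (J : Finset (ZMod N)) (b : ZMod N), b ∈ Q J ↔ t + b ∈ J := by
    intro J b
    rw [hQdef]
    simp only [Finset.mem_image]
    constructor
    · rintro ⟨i, hi, rfl⟩
      have he : t + (i - t) = i := by ring
      rwa [he]
    · intro h
      exact ⟨t + b, h, by ring⟩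
  have hSlab3 : S = I₁ ∨ S = I₂ ∨ S = I₃ := by
    rcases hSlab with h | h
    · exact Or.inl h
    · exact Or.inr (Or.inr h)
  have huniq : ∀ (X Y : Finset (ZMod N)), (X = I₁ ∨ X = I₂ ∨ X = I₃) →
      (Y = I₁ ∨ Y = I₂ ∨ Y = I₃) → ∀ a : ZMod N, a ∈ X → a ∈ Y → X = Y := by
    intro X Y hX hY a ha hb
    rcases hX with rfl | rfl | rfl <;> rcases hY with rfl | rfl | rfl
    · rfl
    · exact (hd12 a ha hb).elim
    · exact (hd13 a ha hb).elim
    · exact (hd12 a hb ha).elim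
    · rfl
    · exact (hd23 a ha hb).elim
    · exact (hd13 a hb ha).elim
    · exact (hd23 a hb ha).elim
    · rfl
  have hiff : ∀ (Jm : Finset (ZMod N)), (Jm = I₁ ∨ Jm = I₂ ∨ Jm = I₃) →
      ∀ b : ZMod N, t + b ∈ Jm → (b = 0 ↔ Jm = S) := by
    intro Jm hJm b hb
    constructor
    · intro h0
      rw [h0, add_zero] at hb
      exact huniq Jm S hJm hSlab3 t hb htS
    · intro hJS
      rw [hJS, hSt, Finset.mem_singleton] at hb
      exact add_eq_left.mp hb
  -- (α): the class sums are constant on the dual classes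
  have hSconst : ∀ (A : Finset (ZMod N)), (A = I₁ ∨ A = I₂ ∨ A = I₃) →
      ∀ (r : Finset (ZMod N)), (r = I₁ ∨ r = I₂ ∨ r = I₃) →
      ∀ c c' : F, c ∈ RF (Q r) → c' ∈ RF (Q r) →
      (∑ x ∈ RF A, ψ (x * c)) = ∑ x ∈ RF A, ψ (x * c') := by
    intro A hA r hr c c' hc hc'
    obtain ⟨hc0, hccls⟩ := (hRFmem _ c).mp hc
    obtain ⟨hc0', hccls'⟩ := (hRFmem _ c').mp hc'
    rw [hRFsum A c hc0, hRFsum A c' hc0']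
    rw [hQmem] at hccls hccls'
    apply hKEY A hA
    · rcases hr with rfl | rfl | rfl
      · rw [hv1 _ hccls, hv1 _ hccls']
      · rw [hv2 _ hccls, hv2 _ hccls']
      · rw [hv3 _ hccls, hv3 _ hccls']
    · rw [hiff r hr (cls c) hccls, hiff r hr (cls c') hccls']
  -- translate of T
  have hTQ : ∀ (r : Finset (ZMod N)) (b : ZMod N), T (Q r) b = T r (b - t) := by
    intro r b
    rw [hTdef, hQdef]
    simp only
    rw [Finset.sum_image (fun a _ a' _ h => by
      have := sub_left_injective (G := ZMod N) h
      exact this)]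
    apply Finset.sum_congr rfl
    intro i _
    congr 1
    ring
  -- (β): the dual sums are constant on the primal classes
  have hbeta : ∀ (r : Finset (ZMod N)), (r = I₁ ∨ r = I₂ ∨ r = I₃) →
      ∀ (Jm : Finset (ZMod N)), (Jm = I₁ ∨ Jm = I₂ ∨ Jm = I₃) →
      ∀ d d' : F, d ∈ RF Jm → d' ∈ RF Jm →
      (∑ c ∈ RF (Q r), ψ (c * (-d))) = ∑ c ∈ RF (Q r), ψ (c * (-d')) := by
    intro r hr Jm hJm d d' hd hd'
    obtain ⟨hd0, hdcls⟩ := (hRFmem _ d).mp hd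
    obtain ⟨hd0', hdcls'⟩ := (hRFmem _ d').mp hd'
    have hnd : (-d : F) ≠ 0 := neg_ne_zero.mpr hd0
    have hnd' : (-d' : F) ≠ 0 := neg_ne_zero.mpr hd0'
    rw [hRFsum _ _ hnd, hRFsum _ _ hnd', hclsNeg d hd0, hclsNeg d' hd0', hTQ, hTQ]
    have he : ∀ b : ZMod N, t + (b - t) = b := fun b => by ring
    apply hKEY r hr
    · rw [he, he]
      rcases hJm with rfl | rfl | rfl
      · rw [hv1 _ hdcls, hv1 _ hdcls']
      · rw [hv2 _ hdcls, hv2 _ hdcls']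
      · rw [hv3 _ hdcls, hv3 _ hdcls']
    · rw [hiff Jm hJm (cls d - t) (by rw [he]; exact hdcls),
        hiff Jm hJm (cls d' - t) (by rw [he]; exact hdcls')]
  -- partition of the full character sum
  have hQpart : ∀ g : F → ℂ, (∑ c : F, g c)
      = g 0 + ((∑ c ∈ RF (Q I₁), g c) + (∑ c ∈ RF (Q I₂), g c) + (∑ c ∈ RF (Q I₃), g c)) := by
    intro g
    have hgen : ∀ (X Y : Finset (ZMod N)), (∀ a : ZMod N, a ∈ X → a ∈ Y → False) →
        Disjoint (RF (Q X)) (RF (Q Y)) := by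
      intro X Y hXY
      rw [Finset.disjoint_left]
      intro c h1 h2
      exact hXY _ ((hQmem _ _).mp ((hRFmem _ c).mp h1).2) ((hQmem _ _).mp ((hRFmem _ c).mp h2).2)
    have hdQ12 : Disjoint (RF (Q I₁)) (RF (Q I₂)) := hgen _ _ hd12
    have hdQ3 : Disjoint (RF (Q I₁) ∪ RF (Q I₂)) (RF (Q I₃)) := by
      rw [Finset.disjoint_union_left]
      exact ⟨hgen _ _ hd13, hgen _ _ hd23⟩
    have h0U : (0 : F) ∉ (RF (Q I₁) ∪ RF (Q I₂) ∪ RF (Q I₃)) := by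
      intro h
      rcases Finset.mem_union.mp h with h | h
      · rcases Finset.mem_union.mp h with h | h
        · exact ((hRFmem _ _).mp h).1 rfl
        · exact ((hRFmem _ _).mp h).1 rfl
      · exact ((hRFmem _ _).mp h).1 rfl
    have hUuniv : insert (0 : F) (RF (Q I₁) ∪ RF (Q I₂) ∪ RF (Q I₃)) = Finset.univ := by
      apply Finset.eq_univ_of_forall
      intro c
      by_cases hc : c = 0
      · rw [hc]; exact Finset.mem_insert_self _ _
      · apply Finset.mem_insert_of_mem
        rcases hvals (t + cls c) with h | h | h
        · exact Finset.mem_union.mpr (Or.inl (Finset.mem_union.mpr (Or.inl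
            ((hRFmem _ _).mpr ⟨hc, (hQmem _ _).mpr h⟩))))
        · exact Finset.mem_union.mpr (Or.inl (Finset.mem_union.mpr (Or.inr
            ((hRFmem _ _).mpr ⟨hc, (hQmem _ _).mpr h⟩))))
        · exact Finset.mem_union.mpr (Or.inr ((hRFmem _ _).mpr ⟨hc, (hQmem _ _).mpr h⟩))
    calc (∑ c : F, g c)
        = ∑ c ∈ insert (0 : F) (RF (Q I₁) ∪ RF (Q I₂) ∪ RF (Q I₃)), g c := by rw [hUuniv]
      _ = g 0 + ∑ c ∈ (RF (Q I₁) ∪ RF (Q I₂) ∪ RF (Q I₃)), g c := Finset.sum_insert h0U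
      _ = g 0 + ((∑ c ∈ RF (Q I₁), g c) + (∑ c ∈ RF (Q I₂), g c) + (∑ c ∈ RF (Q I₃), g c)) := by
          rw [Finset.sum_union hdQ3, Finset.sum_union hdQ12]
  -- the main count-equality lemma
  have hmaincnt : ∀ (A : Finset (ZMod N)), (A = I₁ ∨ A = I₂ ∨ A = I₃) →
      ∀ (B : Finset (ZMod N)), (B = I₁ ∨ B = I₂ ∨ B = I₃) →
      ∀ (Jm : Finset (ZMod N)), (Jm = I₁ ∨ Jm = I₂ ∨ Jm = I₃) →
      ∀ d d' : F, d ∈ RF Jm → d' ∈ RF Jm →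
      cnt (RF A) (RF B) d = cnt (RF A) (RF B) d' := by
    intro A hA B hB Jm hJm d d' hd hd'
    have hpartsum : ∀ (r : Finset (ZMod N)), (r = I₁ ∨ r = I₂ ∨ r = I₃) →
        (∑ c ∈ RF (Q r), (∑ u ∈ RF A, ψ (u * c)) * (∑ v ∈ RF B, ψ (v * c)) * ψ (c * (-d)))
        = ∑ c ∈ RF (Q r), (∑ u ∈ RF A, ψ (u * c)) * (∑ v ∈ RF B, ψ (v * c)) * ψ (c * (-d')) := by
      intro r hr
      by_cases hne : (RF (Q r)).Nonempty
      · obtain ⟨c₀, hc₀⟩ := hne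
        have hconst : ∀ e : F, (∑ c ∈ RF (Q r),
            (∑ u ∈ RF A, ψ (u * c)) * (∑ v ∈ RF B, ψ (v * c)) * ψ (c * (-e)))
            = (∑ u ∈ RF A, ψ (u * c₀)) * (∑ v ∈ RF B, ψ (v * c₀))
              * ∑ c ∈ RF (Q r), ψ (c * (-e)) := by
          intro e
          rw [Finset.mul_sum]
          apply Finset.sum_congr rfl
          intro c hc
          rw [hSconst A hA r hr c c₀ hc hc₀, hSconst B hB r hr c c₀ hc hc₀]
        rw [hconst d, hconst d', hbeta r hr Jm hJm d d' hd hd']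
      · rw [Finset.not_nonempty_iff_eq_empty.mp hne]
        simp only [Finset.sum_empty]
    have hchar : (q : ℂ) * cnt (RF A) (RF B) d = (q : ℂ) * cnt (RF A) (RF B) d' := by
      rw [hcntchar, hcntchar,
        hQpart (fun c => (∑ u ∈ RF A, ψ (u * c)) * (∑ v ∈ RF B, ψ (v * c)) * ψ (c * (-d))),
        hQpart (fun c => (∑ u ∈ RF A, ψ (u * c)) * (∑ v ∈ RF B, ψ (v * c)) * ψ (c * (-d')))]
      rw [hpartsum I₁ (Or.inl rfl), hpartsum I₂ (Or.inr (Or.inl rfl)),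
        hpartsum I₃ (Or.inr (Or.inr rfl))]
      congr 2
      rw [zero_mul, zero_mul]
    have := mul_left_cancel₀ hqC hchar
    exact_mod_cast this
  -- Finset forms of the four relations
  set RS : Fin 4 → Finset F := fun i =>
    if i = 0 then {0} else if i = 1 then RF I₁ else if i = 2 then RF I₂ else RF I₃ with hRSdef
  have hRS0 : RS 0 = {0} := by simp [hRSdef]
  have hRS1 : RS 1 = RF I₁ := by simp [hRSdef]
  have hRS2 : RS 2 = RF I₂ := by simp [hRSdef]
  have hRS3 : RS 3 = RF I₃ := by simp [hRSdef]
  have hRS : ∀ (jj : Fin 4) (x : F), x ∈ R jj ↔ x ∈ RS jj := by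
    intro jj x
    have h4 : jj = 0 ∨ jj = 1 ∨ jj = 2 ∨ jj = 3 := by omega
    rcases h4 with rfl | rfl | rfl | rfl
    · rw [hR0, hRS0]; simp
    · rw [hRS1]; exact hR1' x
    · rw [hRS2]; exact hR2' x
    · rw [hRS3]; exact hR3' x
  have hRSdisj : ∀ (l m : Fin 4), l ≠ m → ∀ d : F, d ∈ RS l → d ∈ RS m → False := by
    intro l m hlm d hl hm
    have hnz : ∀ (J : Finset (ZMod N)), d ∈ RF J → d ≠ 0 := fun J h => ((hRFmem J d).mp h).1
    have hcl : ∀ (J : Finset (ZMod N)), d ∈ RF J → cls d ∈ J := fun J h => ((hRFmem J d).mp h).2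
    have h0 : ∀ h : d ∈ ({0} : Finset F), d = 0 := fun h => Finset.mem_singleton.mp h
    have h4 : ∀ k : Fin 4, k = 0 ∨ k = 1 ∨ k = 2 ∨ k = 3 := by omega
    rcases h4 l with rfl | rfl | rfl | rfl <;> rcases h4 m with rfl | rfl | rfl | rfl
    · exact hlm rfl
    · rw [hRS0] at hl; rw [hRS1] at hm; exact hnz _ hm (h0 hl)
    · rw [hRS0] at hl; rw [hRS2] at hm; exact hnz _ hm (h0 hl)
    · rw [hRS0] at hl; rw [hRS3] at hm; exact hnz _ hm (h0 hl)
    · rw [hRS0] at hm; rw [hRS1] at hl; exact hnz _ hl (h0 hm)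
    · exact hlm rfl
    · rw [hRS1] at hl; rw [hRS2] at hm; exact hd12 _ (hcl _ hl) (hcl _ hm)
    · rw [hRS1] at hl; rw [hRS3] at hm; exact hd13 _ (hcl _ hl) (hcl _ hm)
    · rw [hRS0] at hm; rw [hRS2] at hl; exact hnz _ hl (h0 hm)
    · rw [hRS2] at hl; rw [hRS1] at hm; exact hd12 _ (hcl _ hm) (hcl _ hl)
    · exact hlm rfl
    · rw [hRS2] at hl; rw [hRS3] at hm; exact hd23 _ (hcl _ hl) (hcl _ hm)
    · rw [hRS0] at hm; rw [hRS3] at hl; exact hnz _ hl (h0 hm)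
    · rw [hRS3] at hl; rw [hRS1] at hm; exact hd13 _ (hcl _ hm) (hcl _ hl)
    · rw [hRS3] at hl; rw [hRS2] at hm; exact hd23 _ (hcl _ hm) (hcl _ hl)
    · exact hlm rfl
  have hcnt0L : ∀ (B : Finset F) (d : F), cnt {0} B d = if d ∈ B then 1 else 0 := by
    intro B d
    rw [hcntdef]
    simp only
    have hset : ((({(0 : F)} : Finset F) ×ˢ B).filter fun uv => uv.1 + uv.2 = d)
        = if d ∈ B then {((0 : F), d)} else ∅ := by
      split_ifs with hdB
      · ext uv
        simp only [Finset.mem_filter, Finset.mem_product, Finset.mem_singleton, Prod.ext_iff]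
        constructor
        · rintro ⟨⟨h1, h2⟩, h3⟩
          rw [h1, zero_add] at h3
          exact ⟨h1, h3⟩
        · rintro ⟨h1, h2⟩
          rw [h1, h2]
          exact ⟨⟨rfl, hdB⟩, by rw [zero_add]⟩
      · ext uv
        simp only [Finset.mem_filter, Finset.mem_product, Finset.mem_singleton,
          Finset.notMem_empty, iff_false]
        rintro ⟨⟨h1, h2⟩, h3⟩
        rw [h1, zero_add] at h3
        rw [h3] at h2
        exact hdB h2
    rw [hset]
    split_ifs <;> simp
  have hcnt0R : ∀ (A : Finset F) (d : F), cnt A {0} d = if d ∈ A then 1 else 0 := by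
    intro A d
    rw [hcntdef]
    simp only
    have hset : ((A ×ˢ ({(0 : F)} : Finset F)).filter fun uv => uv.1 + uv.2 = d)
        = if d ∈ A then {(d, (0 : F))} else ∅ := by
      split_ifs with hdA
      · ext uv
        simp only [Finset.mem_filter, Finset.mem_product, Finset.mem_singleton, Prod.ext_iff]
        constructor
        · rintro ⟨⟨h1, h2⟩, h3⟩
          rw [h2, add_zero] at h3
          exact ⟨h3, h2⟩
        · rintro ⟨h1, h2⟩
          rw [h1, h2]
          exact ⟨⟨hdA, rfl⟩, by rw [add_zero]⟩
      · ext uv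
        simp only [Finset.mem_filter, Finset.mem_product, Finset.mem_singleton,
          Finset.notMem_empty, iff_false]
        rintro ⟨⟨h1, h2⟩, h3⟩
        rw [h2, add_zero] at h3
        rw [h3] at h1
        exact hdA h1
    rw [hset]
    split_ifs <;> simp
  -- final assembly
  intro j l m
  have hstep : ∀ x y : F, Nat.card {z : F // x - z ∈ R j ∧ z - y ∈ R l}
      = cnt (RS j) (RS l) (x - y) := by
    intro x y
    rw [← hcard' (RS j) (RS l) x y]
    apply Nat.card_congr
    apply Equiv.subtypeEquivRight
    intro z
    exact and_congr (hRS j (x - z)) (hRS l (z - y))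
  suffices h : ∃ c, ∀ d : F, d ∈ RS m → cnt (RS j) (RS l) d = c by
    obtain ⟨c, hc⟩ := h
    exact ⟨c, fun x y hxy => by rw [hstep x y]; exact hc _ ((hRS m _).mp hxy)⟩
  have hlab : ∀ k : Fin 4, k ≠ 0 → ∃ Jk, (Jk = I₁ ∨ Jk = I₂ ∨ Jk = I₃) ∧ RS k = RF Jk := by
    intro k hk
    have h4 : k = 0 ∨ k = 1 ∨ k = 2 ∨ k = 3 := by omega
    rcases h4 with rfl | rfl | rfl | rfl
    · exact absurd rfl hk
    · exact ⟨I₁, Or.inl rfl, hRS1⟩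
    · exact ⟨I₂, Or.inr (Or.inl rfl), hRS2⟩
    · exact ⟨I₃, Or.inr (Or.inr rfl), hRS3⟩
  by_cases hm0 : m = 0
  · subst hm0
    refine ⟨cnt (RS j) (RS l) 0, fun d hd => ?_⟩
    rw [hRS0, Finset.mem_singleton] at hd
    rw [hd]
  obtain ⟨Jm, hJmlab, hJmeq⟩ := hlab m hm0
  by_cases hj0 : j = 0
  · subst hj0
    refine ⟨if l = m then 1 else 0, fun d hd => ?_⟩
    rw [hRS0, hcnt0L (RS l) d]
    by_cases hlm : l = m
    · rw [if_pos hlm, if_pos (hlm ▸ hd)]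
    · rw [if_neg hlm, if_neg (fun hdl => hRSdisj l m hlm d hdl hd)]
  by_cases hl0 : l = 0
  · subst hl0
    refine ⟨if j = m then 1 else 0, fun d hd => ?_⟩
    rw [hRS0, hcnt0R (RS j) d]
    by_cases hjm : j = m
    · rw [if_pos hjm, if_pos (hjm ▸ hd)]
    · rw [if_neg hjm, if_neg (fun hdj => hRSdisj j m hjm d hdj hd)]
  obtain ⟨A, hAlab, hAeq⟩ := hlab j hj0
  obtain ⟨B, hBlab, hBeq⟩ := hlab l hl0
  by_cases hne : (RS m).Nonempty
  · obtain ⟨d₀, hd₀⟩ := hne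
    refine ⟨cnt (RS j) (RS l) d₀, fun d hd => ?_⟩
    rw [hAeq, hBeq]
    rw [hJmeq] at hd hd₀
    exact hmaincnt A hAlab B hBlab Jm hJmlab d d₀ hd hd₀
  · exact ⟨0, fun d hd => absurd ⟨d, hd⟩ hne⟩
end
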